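/- Equivalence of LP-Struct and LP-Unif after realizability transformation: for any logic program Φ and query A[y] with y fresh, F(Φ) ⊢ {A[y]} ⇝* ∅ (the query succeeds by LP-Unif reduction) if and only if F(Φ) ⊢ {A[y]} (→^ν·↪^1)* ∅ (the query succeeds by LP-Struct reduction, i.e. by iterating: reduce to term-matching normal form, then perform at most one substitutional step). -/

import Mathlib

namespace SRes

/-- First-order terms: variables and function symbols applied to lists of terms. -/
inductive Tm : Type where
  | var : ℕ → Tm
  | fn : ℕ → List Tm → Tm

/-- First-order substitutions. -/
abbrev Subst := ℕ → Tm

/-- Applying a substitution to a term. -/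
def Tm.subst (σ : Subst) : Tm → Tm
  | .var x => σ x
  | .fn f ts => .fn f (ts.attach.map (fun t => Tm.subst σ t.1))
decreasing_by
  have := List.sizeOf_lt_of_mem t.2
  simp only [Tm.fn.sizeOf_spec]
  omega

/-- The identity substitution. -/
def Subst.id : Subst := Tm.var

/-- Composition of substitutions: `(Subst.comp θ γ) x = θ(γ(x))`. -/
def Subst.comp (θ γ : Subst) : Subst := fun x => (γ x).subst θ

/-- Free variables of a term. -/
def Tm.fv : Tm → Finset ℕ
  | .var x => {x}
  | .fn _ ts => (ts.attach.map (fun t => Tm.fv t.1)).foldr (· ∪ ·) ∅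
decreasing_by
  have := List.sizeOf_lt_of_mem t.2
  simp only [Tm.fn.sizeOf_spec]
  omega

/-- Function symbols occurring in a term. -/
def Tm.fns : Tm → Finset ℕ
  | .var _ => ∅
  | .fn f ts => insert f ((ts.attach.map (fun t => Tm.fns t.1)).foldr (· ∪ ·) ∅)
decreasing_by
  have := List.sizeOf_lt_of_mem t.2
  simp only [Tm.fn.sizeOf_spec]
  omega

/-- Atomic formulas `P(t1,...,tn)`. -/
structure Atom : Type where
  pred : ℕ
  args : List Tm

def Atom.subst (σ : Subst) (A : Atom) : Atom := ⟨A.pred, A.args.map (Tm.subst σ)⟩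

def Atom.fv (A : Atom) : Finset ℕ := (A.args.map Tm.fv).foldr (· ∪ ·) ∅

def Atom.fns (A : Atom) : Finset ℕ := (A.args.map Tm.fns).foldr (· ∪ ·) ∅

/-- Renaming the variables of an atom. -/
def Atom.rename (ρ : ℕ → ℕ) (A : Atom) : Atom := A.subst (fun x => .var (ρ x))

/-- `A.ext t'` is `A[t']`: add `t'` as an extra last argument of `A`. -/
def Atom.ext (A : Atom) (t : Tm) : Atom := ⟨A.pred, A.args ++ [t]⟩

def listFV (As : List Atom) : Finset ℕ := (As.map Atom.fv).foldr (· ∪ ·) ∅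

def listFns (As : List Atom) : Finset ℕ := (As.map Atom.fns).foldr (· ∪ ·) ∅

/-- Free variables of a multiset of atoms. -/
def mFV (G : Multiset Atom) : Finset ℕ := (G.map Atom.fv).sup

/-- A logic program: a finite list of axioms `κ : ∀x̄. body ⇒ head`
(each axiom is implicitly universally closed). -/
abbrev Prog := List (ℕ × List Atom × Atom)

def progFns (Φ : Prog) : Finset ℕ :=
  (Φ.map (fun r => r.2.2.fns ∪ listFns r.2.1)).foldr (· ∪ ·) ∅

/-! ### Proof terms (de Bruijn representation for bound proof variables) -/

inductive Pf : Type where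
  | const : ℕ → Pf           -- proof-term constants κ
  | bvar : ℕ → Pf            -- proof-term variables a (de Bruijn)
  | lam : Pf → Pf            -- λa.e
  | app : Pf → Pf → Pf       -- e e'

/-- Lift de Bruijn indices `≥ c` by `d`. -/
def Pf.lift (c d : ℕ) : Pf → Pf
  | .const k => .const k
  | .bvar i => if i < c then .bvar i else .bvar (i + d)
  | .lam p => .lam (p.lift (c+1) d)
  | .app p q => .app (p.lift c d) (q.lift c d)

/-- Substitute `q` for de Bruijn index `k` in a proof term. -/
def Pf.subst (k : ℕ) (q : Pf) : Pf → Pf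
  | .const c => .const c
  | .bvar i => if i < k then .bvar i else if i = k then q.lift 0 k else .bvar (i - 1)
  | .lam p => .lam (Pf.subst (k+1) q p)
  | .app p p' => .app (Pf.subst k q p) (Pf.subst k q p')

/-- Beta-reduction on proof terms: congruence closure of `(λa.p) p' →β [p'/a]p`. -/
inductive Beta : Pf → Pf → Prop where
  | beta (p q : Pf) : Beta (.app (.lam p) q) (p.subst 0 q)
  | appL {p p' q : Pf} : Beta p p' → Beta (.app p q) (.app p' q)
  | appR {p q q' : Pf} : Beta q q' → Beta (.app p q) (.app p q')
  | lam {p p' : Pf} : Beta p p' → Beta (.lam p) (.lam p')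

/-- A proof term is strongly normalizing if every β-reduction sequence from it is finite. -/
def Pf.SN (p : Pf) : Prop := Acc (fun a b => Beta b a) p

/-- β-normal proof terms. -/
def Pf.Normal (p : Pf) : Prop := ∀ q, ¬ Beta p q

/-- First-order proof terms: built from constants and variables by application only. -/
inductive Pf.FirstOrder : Pf → Prop where
  | const (κ : ℕ) : Pf.FirstOrder (.const κ)
  | bvar (a : ℕ) : Pf.FirstOrder (.bvar a)
  | app {p q : Pf} : Pf.FirstOrder p → Pf.FirstOrder q → Pf.FirstOrder (.app p q)

/-- `Pf.lams k p` is `λa1...λak. p`. -/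
def Pf.lams : ℕ → Pf → Pf
  | 0, p => p
  | n+1, p => .lam (Pf.lams n p)

/-- Apply a proof term to a list of proof terms, left associated. -/
def Pf.apps (p : Pf) : List Pf → Pf
  | [] => p
  | q :: qs => Pf.apps (.app p q) qs

/-- The proof term `λā.λb̄.(e2 b̄)(e1 ā)` produced by the cut rule
(`n` is the length of `ā`, `m` the length of `b̄`). -/
def cutTerm (n m : ℕ) (e₁ e₂ : Pf) : Pf :=
  Pf.lams (n + m) <|
    .app (Pf.apps (e₂.lift 0 (n+m)) ((List.range m).map (fun j => Pf.bvar (m - 1 - j))))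
         (Pf.apps (e₁.lift 0 (n+m)) ((List.range n).map (fun j => Pf.bvar (n + m - 1 - j))))

/-! ### Horn formulas as types -/

/-- Horn formulas `A1,...,An ⇒ B`, either unquantified (`horn`)
or universally closed over all their free term variables (`all`). -/
inductive Formula : Type where
  | horn : List Atom → Atom → Formula
  | all : List Atom → Atom → Formula

/-- The Horn-formulas-as-types typing judgment `e : F` relative to a program `Φ`. -/
inductive Derives (Φ : Prog) : Pf → Formula → Prop where
  | ax {κ : ℕ} {body : List Atom} {head : Atom} :
      (κ, body, head) ∈ Φ → Derives Φ (.const κ) (.all body head)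
  | gen {e : Pf} {body : List Atom} {head : Atom} :
      Derives Φ e (.horn body head) → Derives Φ e (.all body head)
  | inst {e : Pf} {body : List Atom} {head : Atom} (σ : Subst) :
      Derives Φ e (.all body head) →
      Derives Φ e (.horn (body.map (Atom.subst σ)) (head.subst σ))
  | cut {e₁ e₂ : Pf} {As Bs : List Atom} {D C : Atom} :
      Derives Φ e₁ (.horn As D) → Derives Φ e₂ (.horn (Bs ++ [D]) C) →
      Derives Φ (cutTerm As.length Bs.length e₁ e₂) (.horn (As ++ Bs) C)

/-! ### Reductions -/

def Unifies (γ : Subst) (A B : Atom) : Prop := A.subst γ = B.subst γ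

/-- `γ` is a most general unifier of `A` and `B`. -/
def IsMGU (γ : Subst) (A B : Atom) : Prop :=
  Unifies γ A B ∧ ∀ δ, Unifies δ A B → ∃ θ, δ = Subst.comp θ γ

/-- `(body, head)` is a freshly renamed copy of the axiom `κ` of `Φ`,
whose variables do not occur in the goal multiset `G`. -/
def FreshRuleFor (Φ : Prog) (κ : ℕ) (G : Multiset Atom)
    (body : List Atom) (head : Atom) : Prop :=
  ∃ (body₀ : List Atom) (head₀ : Atom) (ρ : ℕ → ℕ),
    (κ, body₀, head₀) ∈ Φ ∧ Function.Injective ρ ∧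
    body = body₀.map (Atom.rename ρ) ∧ head = head₀.rename ρ ∧
    Disjoint (listFV body ∪ head.fv) (mFV G)

/-- Term-matching (LP-TM) reduction step via axiom `κ`:
replace `Ai = σC` by `σB1,...,σBm`. -/
def TMStep (Φ : Prog) (κ : ℕ) (G G' : Multiset Atom) : Prop :=
  ∃ (body : List Atom) (head : Atom) (σ : Subst) (rest : Multiset Atom),
    (κ, body, head) ∈ Φ ∧ G = (head.subst σ) ::ₘ rest ∧
    G' = ↑(body.map (Atom.subst σ)) + rest

def TMred (Φ : Prog) (G G' : Multiset Atom) : Prop := ∃ κ, TMStep Φ κ G G'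

/-- `G` is in term-matching normal form. -/
def TMNF (Φ : Prog) (G : Multiset Atom) : Prop := ∀ G', ¬ TMred Φ G G'

/-- `Φ` is productive: every term-matching reduction sequence is finite. -/
def Productive (Φ : Prog) : Prop := ∀ G, Acc (fun a b => TMred Φ b a) G

/-- Unification (LP-Unif) reduction step via axiom `κ` with most general unifier `γ`. -/
def UnifStepL (Φ : Prog) (κ : ℕ) (γ : Subst) (G G' : Multiset Atom) : Prop :=
  ∃ (A : Atom) (rest : Multiset Atom) (body : List Atom) (head : Atom),
    G = A ::ₘ rest ∧ FreshRuleFor Φ κ G body head ∧ IsMGU γ head A ∧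
    G' = ↑(body.map (Atom.subst γ)) + rest.map (Atom.subst γ)

/-- Substitutional reduction step via axiom `κ` with most general unifier `γ`. -/
def SubStepL (Φ : Prog) (κ : ℕ) (γ : Subst) (G G' : Multiset Atom) : Prop :=
  ∃ (A : Atom) (rest : Multiset Atom) (body : List Atom) (head : Atom),
    G = A ::ₘ rest ∧ FreshRuleFor Φ κ G body head ∧ IsMGU γ head A ∧
    G' = G.map (Atom.subst γ)

/-- Stateful LP-Unif reduction on pairs (goal multiset, accumulated substitution). -/
def unifR (Φ : Prog) (p q : Multiset Atom × Subst) : Prop :=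
  ∃ κ γ, UnifStepL Φ κ γ p.1 q.1 ∧ q.2 = Subst.comp γ p.2

/-- Stateful LP-Struct reduction `→^μ·↪^1`: term-matching reduce to `→`-normal form,
then perform at most one substitutional step. -/
def structR (Φ : Prog) (p q : Multiset Atom × Subst) : Prop :=
  ∃ G', Relation.ReflTransGen (TMred Φ) p.1 G' ∧ TMNF Φ G' ∧
    ((q.1 = G' ∧ q.2 = p.2) ∨ ∃ κ γ, SubStepL Φ κ γ G' q.1 ∧ q.2 = Subst.comp γ p.2)

/-- A multiset of queries succeeds by LP-Unif reduction. -/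
def UnifSucc (Φ : Prog) (G : Multiset Atom) : Prop :=
  ∃ γ, Relation.ReflTransGen (unifR Φ) (G, Subst.id) (0, γ)

/-- A multiset of queries succeeds by LP-Struct reduction. -/
def StructSucc (Φ : Prog) (G : Multiset Atom) : Prop :=
  ∃ γ, Relation.ReflTransGen (structR Φ) (G, Subst.id) (0, γ)

/-- `Φ` is non-overlapping: heads of distinct axioms have no common instance. -/
def NonOverlapping (Φ : Prog) : Prop :=
  ∀ κ body head κ' body' head', (κ, body, head) ∈ Φ → (κ', body', head') ∈ Φ → κ ≠ κ' →
    ∀ σ δ : Subst, head.subst σ ≠ head'.subst δ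

/-! ### Realizability transformation -/

def ruleFV (body : List Atom) (head : Atom) : Finset ℕ := listFV body ∪ head.fv

/-- `extBody [A1,...,Am] [y1,...,ym] = [A1[y1],...,Am[ym]]`. -/
def extBody (As : List Atom) (ys : List ℕ) : List Atom :=
  List.zipWith (fun A y => A.ext (Tm.var y)) As ys

/-- Realizability transformation of a single axiom `κ : ∀x̄. A1,...,Am ⇒ B`
into `κ : ∀x̄∀ȳ. A1[y1],...,Am[ym] ⇒ B[f_κ(y1,...,ym)]` with fresh distinct `ȳ`. -/
def transRule (fsym : ℕ → ℕ) (κ : ℕ) (body : List Atom) (head : Atom) : List Atom × Atom :=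
  let N := (ruleFV body head).sup id + 1
  let ys := (List.range body.length).map (fun i => N + i)
  (extBody body ys, head.ext (.fn (fsym κ) (ys.map Tm.var)))

/-- The realizability transformation `F(Φ)`. -/
def transProg (fsym : ℕ → ℕ) (Φ : Prog) : Prog :=
  Φ.map (fun r => (r.1, transRule fsym r.1 r.2.1 r.2.2))

/-- `fsym` assigns a fresh function symbol `f_κ` to each proof-term constant `κ`. -/
def FreshSyms (fsym : ℕ → ℕ) (Φ : Prog) : Prop :=
  Function.Injective fsym ∧ ∀ κ, fsym κ ∉ progFns Φ

/-- The representation `⟦·⟧_φ` of first-order normal proof terms as first-order terms: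
`⟦a⟧_φ = φ(a)` and `⟦κ p1 ... pn⟧_φ = f_κ(⟦p1⟧_φ,...,⟦pn⟧_φ)`. -/
inductive PfRep (fsym : ℕ → ℕ) (φ : ℕ → Tm) : Pf → Tm → Prop where
  | bvar (a : ℕ) : PfRep fsym φ (.bvar a) (φ a)
  | app (κ : ℕ) (ps : List Pf) (ts : List Tm) (hlen : ps.length = ts.length)
      (h : ∀ pt ∈ ps.zip ts, PfRep fsym φ pt.1 pt.2) :
      PfRep fsym φ (Pf.apps (.const κ) ps) (.fn (fsym κ) ts)

/-- The map `[ȳ/ā]` sending the bound proof variables `a1,...,ak` (de Bruijn) of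
`λa1...ak.n` to the first-order variables `y1,...,yk`. -/
def mkPhi (ys : List ℕ) : ℕ → Tm := fun j => Tm.var (ys.getD (ys.length - 1 - j) 0)

/-! ### Auxiliary development for the proof -/

section Aux

/-- Custom induction principle for `Tm`. -/
theorem Tm.ind' {motive : Tm → Prop} (hv : ∀ x, motive (.var x))
    (hf : ∀ f ts, (∀ t ∈ ts, motive t) → motive (.fn f ts)) : ∀ t, motive t :=
  fun t => Tm.rec (motive_1 := motive) (motive_2 := fun l => ∀ t ∈ l, motive t)
    hv (fun f ts ih => hf f ts ih) (by intro t ht; simp at ht)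
    (fun _ _ hhd htl => by
      intro t ht
      rcases List.mem_cons.mp ht with h | h
      · exact h ▸ hhd
      · exact htl t h) t

@[simp] theorem Tm.subst_var (σ : Subst) (x : ℕ) : Tm.subst σ (.var x) = σ x := by
  rw [Tm.subst]

@[simp] theorem Tm.subst_fn (σ : Subst) (f : ℕ) (ts : List Tm) :
    Tm.subst σ (.fn f ts) = .fn f (ts.map (Tm.subst σ)) := by
  rw [Tm.subst]
  congr 1
  simp [List.attach_map_val]

@[simp] theorem Tm.fv_var (x : ℕ) : Tm.fv (.var x) = {x} := by rw [Tm.fv]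

theorem Tm.fv_fn (f : ℕ) (ts : List Tm) :
    Tm.fv (.fn f ts) = (ts.map Tm.fv).foldr (· ∪ ·) ∅ := by
  rw [Tm.fv]
  congr 1
  simp [List.attach_map_val]

theorem mem_foldr_union {α : Type*} [DecidableEq α] (l : List (Finset α)) (x : α) :
    x ∈ l.foldr (· ∪ ·) ∅ ↔ ∃ s ∈ l, x ∈ s := by
  induction l with
  | nil => simp
  | cons a l ih => simp [ih]

theorem Tm.mem_fv_fn {x f ts} :
    x ∈ Tm.fv (.fn f ts) ↔ ∃ t ∈ ts, x ∈ Tm.fv t := by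
  rw [Tm.fv_fn, mem_foldr_union]
  constructor
  · rintro ⟨s, hs, hx⟩
    rcases List.mem_map.mp hs with ⟨t, ht, rfl⟩
    exact ⟨t, ht, hx⟩
  · rintro ⟨t, ht, hx⟩
    exact ⟨Tm.fv t, List.mem_map.mpr ⟨t, ht, rfl⟩, hx⟩

@[simp] theorem Subst.comp_apply (θ γ : Subst) (x : ℕ) :
    Subst.comp θ γ x = (γ x).subst θ := rfl

theorem Tm.subst_subst (γ θ : Subst) (t : Tm) :
    (t.subst γ).subst θ = t.subst (Subst.comp θ γ) := by
  induction t using Tm.ind' with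
  | hv x => simp
  | hf f ts ih =>
    simp only [Tm.subst_fn, List.map_map]
    congr 1
    exact List.map_congr_left fun t ht => ih t ht

theorem Tm.subst_congr {γ δ : Subst} {t : Tm} (h : ∀ x ∈ t.fv, γ x = δ x) :
    t.subst γ = t.subst δ := by
  induction t using Tm.ind' with
  | hv x => simpa using h x (by simp)
  | hf f ts ih =>
    simp only [Tm.subst_fn]
    congr 1
    exact List.map_congr_left fun t ht => ih t ht
      (fun x hx => h x (Tm.mem_fv_fn.mpr ⟨t, ht, hx⟩))

theorem Tm.eq_on_fv {γ δ : Subst} {t : Tm} (h : t.subst γ = t.subst δ) :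
    ∀ x ∈ t.fv, γ x = δ x := by
  induction t using Tm.ind' with
  | hv x => intro y hy; simp at hy; subst hy; simpa using h
  | hf f ts ih =>
    intro x hx
    rcases Tm.mem_fv_fn.mp hx with ⟨t, ht, hxt⟩
    simp only [Tm.subst_fn, Tm.fn.injEq, true_and] at h
    have heq : t.subst γ = t.subst δ := by
      rcases List.mem_iff_get.mp ht with ⟨i, rfl⟩
      have := congrArg (fun l => l[i.1]?) h
      simpa using this
    exact ih t ht heq x hxt

@[simp] theorem Tm.subst_id (t : Tm) : t.subst Subst.id = t := by
  induction t using Tm.ind' with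
  | hv x => simp [Subst.id]
  | hf f ts ih =>
    simp only [Tm.subst_fn]
    congr 1
    conv_rhs => rw [← List.map_id ts]
    exact List.map_congr_left fun t ht => ih t ht

theorem Tm.fv_subst (γ : Subst) (t : Tm) :
    ∀ x, x ∈ (t.subst γ).fv ↔ ∃ y ∈ t.fv, x ∈ (γ y).fv := by
  induction t using Tm.ind' with
  | hv z => intro x; simp
  | hf f ts ih =>
    intro x
    rw [Tm.subst_fn]
    constructor
    · intro hx
      rcases Tm.mem_fv_fn.mp hx with ⟨t', ht', hx⟩
      rcases List.mem_map.mp ht' with ⟨t, ht, rfl⟩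
      rcases (ih t ht x).mp hx with ⟨y, hy, hxy⟩
      exact ⟨y, Tm.mem_fv_fn.mpr ⟨t, ht, hy⟩, hxy⟩
    · rintro ⟨y, hy, hxy⟩
      rcases Tm.mem_fv_fn.mp hy with ⟨t, ht, hyt⟩
      exact Tm.mem_fv_fn.mpr ⟨t.subst γ, List.mem_map.mpr ⟨t, ht, rfl⟩, (ih t ht x).mpr ⟨y, hyt, hxy⟩⟩

/-- Size of a term (for the occurs check). -/
def Tm.size : Tm → ℕ
  | .var _ => 1
  | .fn _ ts => (ts.attach.map (fun t => Tm.size t.1)).sum + 1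
decreasing_by
  have := List.sizeOf_lt_of_mem t.2
  simp only [Tm.fn.sizeOf_spec]
  omega

@[simp] theorem Tm.size_var (x : ℕ) : Tm.size (.var x) = 1 := by rw [Tm.size]

theorem Tm.size_fn (f : ℕ) (ts : List Tm) :
    Tm.size (.fn f ts) = (ts.map Tm.size).sum + 1 := by
  rw [Tm.size]
  congr 2
  simp [List.attach_map_val]

theorem Tm.size_pos (t : Tm) : 0 < t.size := by
  induction t using Tm.ind' with
  | hv x => simp
  | hf f ts _ => rw [Tm.size_fn]; omega

end Aux


section Unification

/-- Unifying a list of equations. -/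
def unifiesL (γ : Subst) (l : List (Tm × Tm)) : Prop :=
  ∀ p ∈ l, p.1.subst γ = p.2.subst γ

/-- Variables of a list of equations. -/
def Vl : List (Tm × Tm) → Finset ℕ
  | [] => ∅
  | p :: r => p.1.fv ∪ p.2.fv ∪ Vl r

@[simp] theorem Vl_nil : Vl [] = ∅ := rfl
@[simp] theorem Vl_cons (p : Tm × Tm) (r : List (Tm × Tm)) :
    Vl (p :: r) = p.1.fv ∪ p.2.fv ∪ Vl r := rfl

theorem mem_Vl {x : ℕ} : ∀ {l : List (Tm × Tm)},
    x ∈ Vl l ↔ ∃ p ∈ l, x ∈ p.1.fv ∨ x ∈ p.2.fv := by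
  intro l
  induction l with
  | nil => simp
  | cons p r ih =>
    simp only [Vl_cons, Finset.mem_union, List.mem_cons, ih]
    constructor
    · rintro ((h | h) | ⟨p', hp', h⟩)
      · exact ⟨p, Or.inl rfl, Or.inl h⟩
      · exact ⟨p, Or.inl rfl, Or.inr h⟩
      · exact ⟨p', Or.inr hp', h⟩
    · rintro ⟨p', (rfl | hp'), h⟩
      · exact Or.inl (by tauto)
      · exact Or.inr ⟨p', hp', h⟩

def sizeL (l : List (Tm × Tm)) : ℕ := (l.map fun p => p.1.size + p.2.size).sum

@[simp] theorem sizeL_nil : sizeL [] = 0 := rfl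
@[simp] theorem sizeL_cons (p : Tm × Tm) (r : List (Tm × Tm)) :
    sizeL (p :: r) = p.1.size + p.2.size + sizeL r := by
  simp [sizeL]

/-- `μ` is an mgu of the equation list `l`, with support inside `Vl l`. -/
def IsMguL (μ : Subst) (l : List (Tm × Tm)) : Prop :=
  unifiesL μ l ∧ (∀ δ, unifiesL δ l → ∃ θ, δ = Subst.comp θ μ) ∧
  (∀ z, z ∉ Vl l → μ z = .var z) ∧ ∀ z, (μ z).fv ⊆ Vl l ∪ {z}

theorem occurs_size {δ : Subst} {x : ℕ} {s : Tm} (hx : x ∈ s.fv) :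
    (δ x).size ≤ (s.subst δ).size ∧ (s ≠ .var x → (δ x).size < (s.subst δ).size) := by
  induction s using Tm.ind' with
  | hv y =>
    simp only [Tm.fv_var, Finset.mem_singleton] at hx
    subst hx
    exact ⟨by simp, fun h => absurd rfl h⟩
  | hf f ts ih =>
    rcases Tm.mem_fv_fn.mp hx with ⟨t, ht, hxt⟩
    have h1 : (δ x).size ≤ (t.subst δ).size := (ih t ht hxt).1
    have h2 : (t.subst δ).size ≤ ((ts.map (Tm.subst δ)).map Tm.size).sum := by
      apply List.single_le_sum (by intro y _; omega)
      exact List.mem_map.mpr ⟨t.subst δ, List.mem_map.mpr ⟨t, ht, rfl⟩, rfl⟩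
    have h3 : ((Tm.fn f ts).subst δ).size = ((ts.map (Tm.subst δ)).map Tm.size).sum + 1 := by
      rw [Tm.subst_fn, Tm.size_fn]
    constructor
    · omega
    · intro _; omega

/-- Single-point substitution `[x ↦ s]`. -/
def sub1 (x : ℕ) (s : Tm) : Subst := fun y => if y = x then s else .var y

theorem subst_sub1 {δ : Subst} {x : ℕ} {s : Tm} (h : δ x = s.subst δ) (t : Tm) :
    (t.subst (sub1 x s)).subst δ = t.subst δ := by
  rw [Tm.subst_subst]
  apply Tm.subst_congr
  intro z _
  simp only [Subst.comp_apply, sub1]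
  by_cases hz : z = x
  · subst hz; simp [h]
  · simp [hz]

theorem map_eq_of_zip {γ : Subst} : ∀ {ts ss : List Tm}, ts.length = ss.length →
    (∀ p ∈ ts.zip ss, p.1.subst γ = p.2.subst γ) →
    ts.map (Tm.subst γ) = ss.map (Tm.subst γ) := by
  intro ts
  induction ts with
  | nil =>
    intro ss h _
    cases ss with
    | nil => rfl
    | cons a b => simp at h
  | cons t ts ih =>
    intro ss hlen h
    cases ss with
    | nil => simp at hlen
    | cons s ss =>
      simp only [List.map_cons, List.cons.injEq]
      exact ⟨h (t, s) (by simp [List.zip_cons_cons]),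
        ih (by simpa using hlen) (fun p hp => h p (by simp [List.zip_cons_cons, hp]))⟩

theorem zip_of_map_eq {γ : Subst} : ∀ {ts ss : List Tm},
    ts.map (Tm.subst γ) = ss.map (Tm.subst γ) →
    ∀ p ∈ ts.zip ss, p.1.subst γ = p.2.subst γ := by
  intro ts
  induction ts with
  | nil => intro ss _ p hp; simp at hp
  | cons t ts ih =>
    intro ss h p hp
    cases ss with
    | nil => simp at hp
    | cons s ss =>
      simp only [List.map_cons, List.cons.injEq] at h
      rcases List.mem_cons.mp (by simpa [List.zip_cons_cons] using hp) with h1 | h1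
      · subst h1; exact h.1
      · exact ih h.2 p h1

theorem sizeL_zip_le : ∀ (ts ss : List Tm),
    sizeL (ts.zip ss) ≤ (ts.map Tm.size).sum + (ss.map Tm.size).sum := by
  intro ts
  induction ts with
  | nil => intro ss; simp [sizeL]
  | cons t ts ih =>
    intro ss
    cases ss with
    | nil => simp [sizeL]
    | cons s ss =>
      simp only [List.zip_cons_cons, sizeL_cons, List.map_cons, List.sum_cons]
      have := ih ss
      omega

theorem sizeL_append (l1 l2 : List (Tm × Tm)) :
    sizeL (l1 ++ l2) = sizeL l1 + sizeL l2 := by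
  simp [sizeL]

theorem Vl_append_subset {l1 l2 : List (Tm × Tm)} :
    Vl (l1 ++ l2) ⊆ Vl l1 ∪ Vl l2 := by
  intro x hx
  rcases mem_Vl.mp hx with ⟨p, hp, h⟩
  rcases List.mem_append.mp hp with h1 | h1
  · exact Finset.mem_union_left _ (mem_Vl.mpr ⟨p, h1, h⟩)
  · exact Finset.mem_union_right _ (mem_Vl.mpr ⟨p, h1, h⟩)

theorem IsMguL_id_of_ground {l : List (Tm × Tm)} (hc : Vl l = ∅)
    (hu : ∃ δ, unifiesL δ l) : IsMguL Subst.id l := by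
  obtain ⟨δ, hδ⟩ := hu
  have hfv : ∀ p ∈ l, p.1.fv = ∅ ∧ p.2.fv = ∅ := by
    intro p hp
    constructor <;> (apply Finset.eq_empty_of_forall_notMem; intro x hx)
    · exact absurd (mem_Vl.mpr ⟨p, hp, Or.inl hx⟩) (by simp [hc])
    · exact absurd (mem_Vl.mpr ⟨p, hp, Or.inr hx⟩) (by simp [hc])
  have heq : ∀ p ∈ l, p.1 = p.2 := by
    intro p hp
    have h1 : p.1.subst δ = p.1 := by
      rw [show p.1.subst δ = p.1.subst Subst.id from
        Tm.subst_congr (by intro x hx; rw [(hfv p hp).1] at hx; simp at hx), Tm.subst_id]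
    have h2 : p.2.subst δ = p.2 := by
      rw [show p.2.subst δ = p.2.subst Subst.id from
        Tm.subst_congr (by intro x hx; rw [(hfv p hp).2] at hx; simp at hx), Tm.subst_id]
    rw [← h1, ← h2, hδ p hp]
  refine ⟨fun p hp => by rw [heq p hp], fun δ' _ => ⟨δ', funext fun z => by
    simp [Subst.comp, Subst.id]⟩, fun z _ => rfl, fun z => by simp [Subst.id]⟩

theorem unifiesL_swap_head {δ : Subst} {a b : Tm} {rest : List (Tm × Tm)} :
    unifiesL δ ((a, b) :: rest) ↔ unifiesL δ ((b, a) :: rest) := by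
  constructor <;> (intro h p hp; rcases List.mem_cons.mp hp with h1 | h1)
  · subst h1; exact (h (a, b) (by simp)).symm
  · exact h p (by simp [h1])
  · subst h1; exact (h (b, a) (by simp)).symm
  · exact h p (by simp [h1])

theorem Vl_swap_head {a b : Tm} {rest : List (Tm × Tm)} :
    Vl ((b, a) :: rest) = Vl ((a, b) :: rest) := by
  ext x; simp [Finset.mem_union]; tauto

theorem IsMguL_swap_head {μ : Subst} {a b : Tm} {rest : List (Tm × Tm)}
    (h : IsMguL μ ((a, b) :: rest)) : IsMguL μ ((b, a) :: rest) := by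
  obtain ⟨h1, h2, h3, h4⟩ := h
  exact ⟨unifiesL_swap_head.mp h1, fun δ hδ => h2 δ (unifiesL_swap_head.mpr hδ),
    fun z hz => h3 z (by rwa [← Vl_swap_head]), fun z => by rw [Vl_swap_head]; exact h4 z⟩

/-- Variable elimination step for the unification algorithm. -/
theorem elim_case {n : ℕ} {x : ℕ} {s : Tm} {rest : List (Tm × Tm)}
    (hxs : x ∉ s.fv)
    (hcard : (Vl ((Tm.var x, s) :: rest)).card ≤ n + 1)
    (ihn : ∀ (m : ℕ) (l : List (Tm × Tm)), (Vl l).card ≤ n → sizeL l ≤ m →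
      (∃ δ, unifiesL δ l) → ∃ μ, IsMguL μ l)
    (hu : ∃ δ, unifiesL δ ((Tm.var x, s) :: rest)) :
    ∃ μ, IsMguL μ ((Tm.var x, s) :: rest) := by
  set l := (Tm.var x, s) :: rest with hl
  set τ := sub1 x s with hτ
  set l' := rest.map (fun p => (p.1.subst τ, p.2.subst τ)) with hl'
  have hτx : τ x = s := by simp [hτ, sub1]
  have hτz : ∀ z, z ≠ x → τ z = .var z := by intro z hz; simp [hτ, sub1, hz]
  have hsτ : s.subst τ = s := by
    rw [show s.subst τ = s.subst Subst.id from Tm.subst_congr ?_, Tm.subst_id]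
    intro z hz
    have : z ≠ x := fun h => hxs (h ▸ hz)
    rw [hτz z this]; rfl
  have hxVl : x ∈ Vl l := mem_Vl.mpr ⟨(Tm.var x, s), by simp [hl], by simp⟩
  have hVl' : Vl l' ⊆ (Vl l).erase x := by
    intro y hy
    rcases mem_Vl.mp hy with ⟨p, hp, hcase⟩
    rcases List.mem_map.mp hp with ⟨q, hq, rfl⟩
    have key : ∀ t : Tm, t ∈ [q.1, q.2] → y ∈ (t.subst τ).fv →
        y ≠ x ∧ (y ∈ s.fv ∨ y ∈ t.fv) := by
      intro t _ hyt
      rcases (Tm.fv_subst τ t y).mp hyt with ⟨z, hz, hyz⟩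
      by_cases hzx : z = x
      · subst hzx
        rw [hτx] at hyz
        exact ⟨fun h => hxs (h ▸ hyz), Or.inl hyz⟩
      · rw [hτz z hzx] at hyz
        simp only [Tm.fv_var, Finset.mem_singleton] at hyz
        subst hyz
        exact ⟨hzx, Or.inr hz⟩
    have hmem : y ≠ x ∧ y ∈ Vl l := by
      rcases hcase with h | h
      · obtain ⟨hne, hor⟩ := key q.1 (by simp) h
        refine ⟨hne, ?_⟩
        rcases hor with h1 | h1
        · exact mem_Vl.mpr ⟨(Tm.var x, s), by simp [hl], Or.inr h1⟩
        · exact mem_Vl.mpr ⟨q, by simp [hl, hq], Or.inl h1⟩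
      · obtain ⟨hne, hor⟩ := key q.2 (by simp) h
        refine ⟨hne, ?_⟩
        rcases hor with h1 | h1
        · exact mem_Vl.mpr ⟨(Tm.var x, s), by simp [hl], Or.inr h1⟩
        · exact mem_Vl.mpr ⟨q, by simp [hl, hq], Or.inr h1⟩
    exact Finset.mem_erase.mpr hmem
  have hcard' : (Vl l').card ≤ n := by
    have h1 : (Vl l').card ≤ ((Vl l).erase x).card := Finset.card_le_card hVl'
    have h2 : ((Vl l).erase x).card = (Vl l).card - 1 := Finset.card_erase_of_mem hxVl
    have h3 : 1 ≤ (Vl l).card := Finset.card_pos.mpr ⟨x, hxVl⟩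
    omega
  have huδ : ∀ δ, unifiesL δ l → δ x = s.subst δ := by
    intro δ hδ
    have := hδ (Tm.var x, s) (by simp [hl])
    simpa using this
  have hul' : ∀ δ, unifiesL δ l → unifiesL δ l' := by
    intro δ hδ p hp
    rcases List.mem_map.mp hp with ⟨q, hq, rfl⟩
    simp only
    rw [subst_sub1 (huδ δ hδ), subst_sub1 (huδ δ hδ)]
    exact hδ q (by simp [hl, hq])
  have hu' : ∃ δ, unifiesL δ l' := by
    obtain ⟨δ, hδ⟩ := hu
    exact ⟨δ, hul' δ hδ⟩
  obtain ⟨μ', hμ'⟩ := ihn (sizeL l') l' hcard' le_rfl hu'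
  obtain ⟨hμu, hμf, hμs1, hμs2⟩ := hμ'
  refine ⟨Subst.comp μ' τ, ?_, ?_, ?_, ?_⟩
  · intro p hp
    rcases List.mem_cons.mp hp with h1 | h1
    · subst h1
      simp only [Tm.subst_var, Subst.comp_apply, hτx]
      rw [← Tm.subst_subst, hsτ]
    · rw [← Tm.subst_subst, ← Tm.subst_subst]
      exact hμu (p.1.subst τ, p.2.subst τ) (List.mem_map.mpr ⟨p, h1, rfl⟩)
  · intro δ hδ
    obtain ⟨θ, hθ⟩ := hμf δ (hul' δ hδ)
    refine ⟨θ, funext fun z => ?_⟩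
    have h1 : Subst.comp θ (Subst.comp μ' τ) z = (τ z).subst (Subst.comp θ μ') := by
      simp only [Subst.comp_apply]
      rw [Tm.subst_subst]
    rw [h1, ← hθ]
    by_cases hz : z = x
    · subst hz; rw [hτx]; exact huδ δ hδ
    · rw [hτz z hz]; simp
  · intro z hz
    have hzx : z ≠ x := fun h => hz (h ▸ hxVl)
    simp only [Subst.comp_apply, hτz z hzx, Tm.subst_var]
    apply hμs1
    intro hmem
    exact hz (Finset.mem_of_mem_erase (hVl' hmem))
  · intro z
    intro y hy
    simp only [Subst.comp_apply] at hy
    by_cases hz : z = x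
    · rw [hz, hτx] at hy
      rcases (Tm.fv_subst μ' s y).mp hy with ⟨w, hw, hyw⟩
      have := hμs2 w hyw
      rcases Finset.mem_union.mp this with h1 | h1
      · exact Finset.mem_union_left _ (Finset.mem_of_mem_erase (hVl' h1))
      · simp only [Finset.mem_singleton] at h1
        subst h1
        exact Finset.mem_union_left _ (mem_Vl.mpr ⟨(Tm.var x, s), by simp [hl], Or.inr hw⟩)
    · rw [hτz z hz] at hy
      simp only [Tm.subst_var] at hy
      have := hμs2 z hy
      rcases Finset.mem_union.mp this with h1 | h1
      · exact Finset.mem_union_left _ (Finset.mem_of_mem_erase (hVl' h1))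
      · exact Finset.mem_union_right _ h1

end Unification


section MguMain

theorem IsMguL_drop {μ : Subst} {p : Tm × Tm} {rest : List (Tm × Tm)}
    (hp : p.1 = p.2) (h : IsMguL μ rest) (hVs : Vl rest ⊆ Vl (p :: rest)) :
    IsMguL μ (p :: rest) := by
  obtain ⟨h1, h2, h3, h4⟩ := h
  refine ⟨?_, ?_, ?_, ?_⟩
  · intro q hq
    rcases List.mem_cons.mp hq with h' | h'
    · subst h'; rw [hp]
    · exact h1 q h'
  · intro δ hδ
    exact h2 δ (fun q hq => hδ q (by simp [hq]))
  · intro z hz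
    exact h3 z (fun hmem => hz (hVs hmem))
  · intro z
    exact (h4 z).trans (Finset.union_subset_union_left hVs)

theorem mguL_exists_aux (n : ℕ) : ∀ (m : ℕ) (l : List (Tm × Tm)),
    (Vl l).card ≤ n → sizeL l ≤ m → (∃ δ, unifiesL δ l) → ∃ μ, IsMguL μ l := by
  induction n with
  | zero =>
    intro m l hc _ hu
    exact ⟨Subst.id, IsMguL_id_of_ground (Finset.card_eq_zero.mp (Nat.le_zero.mp hc)) hu⟩
  | succ n ihn =>
    intro m
    induction m with
    | zero =>
      intro l hc hs hu
      cases l with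
      | nil => exact ⟨Subst.id, IsMguL_id_of_ground rfl hu⟩
      | cons p r =>
        exfalso
        have := Tm.size_pos p.1
        have := Tm.size_pos p.2
        simp only [sizeL_cons] at hs
        omega
    | succ m ihm =>
      intro l hc hs hu
      cases l with
      | nil => exact ⟨Subst.id, IsMguL_id_of_ground rfl hu⟩
      | cons p rest =>
        obtain ⟨t, s⟩ := p
        -- helper for the dropped-pair case
        have drop : t = s → sizeL rest ≤ m → ∃ μ, IsMguL μ ((t, s) :: rest) := by
          intro hts hsz
          have hVs : Vl rest ⊆ Vl ((t, s) :: rest) := by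
            intro z hz
            rcases mem_Vl.mp hz with ⟨q, hq, h⟩
            exact mem_Vl.mpr ⟨q, by simp [hq], h⟩
          have hc' : (Vl rest).card ≤ n + 1 :=
            le_trans (Finset.card_le_card hVs) hc
          obtain ⟨δ, hδ⟩ := hu
          obtain ⟨μ, hμ⟩ := ihm rest hc' hsz
            ⟨δ, fun q hq => hδ q (by simp [hq])⟩
          exact ⟨μ, IsMguL_drop hts hμ hVs⟩
        have hsz_rest : sizeL rest ≤ m := by
          have := Tm.size_pos t
          have := Tm.size_pos s
          simp only [sizeL_cons] at hs
          omega
        cases t with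
        | var x =>
          by_cases hsx : s = .var x
          · exact drop hsx.symm hsz_rest
          · by_cases hocc : x ∈ s.fv
            · exfalso
              obtain ⟨δ, hδ⟩ := hu
              have hx : δ x = s.subst δ := by simpa using hδ (Tm.var x, s) (by simp)
              have hlt := (occurs_size (δ := δ) hocc).2 hsx
              rw [hx] at hlt
              exact lt_irrefl _ hlt
            · exact elim_case hocc hc ihn hu
        | fn f ts =>
          cases s with
          | var x =>
            by_cases htx : Tm.fn f ts = .var x
            · exact absurd htx (by simp)
            · by_cases hocc : x ∈ (Tm.fn f ts).fv
              · exfalso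
                obtain ⟨δ, hδ⟩ := hu
                have hx : δ x = (Tm.fn f ts).subst δ := by
                  have := hδ (Tm.fn f ts, Tm.var x) (by simp)
                  simpa using this.symm
                have hlt := (occurs_size (δ := δ) hocc).2 htx
                rw [hx] at hlt
                exact lt_irrefl _ hlt
              · obtain ⟨μ, hμ⟩ := elim_case hocc (by rwa [Vl_swap_head]) ihn
                  (by obtain ⟨δ, hδ⟩ := hu; exact ⟨δ, unifiesL_swap_head.mp hδ⟩)
                exact ⟨μ, IsMguL_swap_head hμ⟩
          | fn g ss =>
            obtain ⟨δ, hδ⟩ := hu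
            have hfn : (Tm.fn f ts).subst δ = (Tm.fn g ss).subst δ :=
              hδ (Tm.fn f ts, Tm.fn g ss) (by simp)
            simp only [Tm.subst_fn, Tm.fn.injEq] at hfn
            obtain ⟨rfl, hmap⟩ := hfn
            have hlen : ts.length = ss.length := by
              have := congrArg List.length hmap
              simpa using this
            set l' := ts.zip ss ++ rest with hl'
            have hVsub : Vl l' ⊆ Vl ((Tm.fn f ts, Tm.fn f ss) :: rest) := by
              intro z hz
              rcases mem_Vl.mp (Vl_append_subset hz |> fun h => hz) with _
              rcases Finset.mem_union.mp (Vl_append_subset hz) with h | h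
              · rcases mem_Vl.mp h with ⟨q, hq, hcase⟩
                obtain ⟨hq1, hq2⟩ := List.of_mem_zip hq
                rcases hcase with h1 | h1
                · exact mem_Vl.mpr ⟨(Tm.fn f ts, Tm.fn f ss), by simp,
                    Or.inl (Tm.mem_fv_fn.mpr ⟨q.1, hq1, h1⟩)⟩
                · exact mem_Vl.mpr ⟨(Tm.fn f ts, Tm.fn f ss), by simp,
                    Or.inr (Tm.mem_fv_fn.mpr ⟨q.2, hq2, h1⟩)⟩
              · rcases mem_Vl.mp h with ⟨q, hq, hcase⟩
                exact mem_Vl.mpr ⟨q, by simp [hq], hcase⟩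
            have hc' : (Vl l').card ≤ n + 1 :=
              le_trans (Finset.card_le_card hVsub) hc
            have hs' : sizeL l' ≤ m := by
              have h1 : sizeL l' = sizeL (ts.zip ss) + sizeL rest := sizeL_append _ _
              have h2 := sizeL_zip_le ts ss
              have h3 : (Tm.fn f ts).size = (ts.map Tm.size).sum + 1 := Tm.size_fn f ts
              have h4 : (Tm.fn f ss).size = (ss.map Tm.size).sum + 1 := Tm.size_fn f ss
              simp only [sizeL_cons] at hs
              omega
            have hul' : ∀ δ', unifiesL δ' ((Tm.fn f ts, Tm.fn f ss) :: rest) →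
                unifiesL δ' l' := by
              intro δ' hδ' q hq
              rcases List.mem_append.mp hq with h1 | h1
              · have hfn' : (Tm.fn f ts).subst δ' = (Tm.fn f ss).subst δ' :=
                  hδ' (Tm.fn f ts, Tm.fn f ss) (by simp)
                simp only [Tm.subst_fn, Tm.fn.injEq, true_and] at hfn'
                exact zip_of_map_eq hfn' q h1
              · exact hδ' q (by simp [h1])
            obtain ⟨μ, hμ⟩ := ihm l' hc' hs' ⟨δ, hul' δ hδ⟩
            obtain ⟨h1, h2, h3, h4⟩ := hμ
            refine ⟨μ, ?_, ?_, ?_, ?_⟩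
            · intro q hq
              rcases List.mem_cons.mp hq with h' | h'
              · subst h'
                simp only [Tm.subst_fn, Tm.fn.injEq, true_and]
                exact map_eq_of_zip hlen (fun q hq => h1 q (by simp [hl', hq]))
              · exact h1 q (by simp [hl', h'])
            · intro δ' hδ'
              exact h2 δ' (hul' δ' hδ')
            · intro z hz
              exact h3 z (fun hmem => hz (hVsub hmem))
            · intro z
              exact (h4 z).trans (Finset.union_subset_union_left hVsub)

/-- Existence of most general unifiers. -/
theorem mguL_exists {l : List (Tm × Tm)} (hu : ∃ δ, unifiesL δ l) : ∃ μ, IsMguL μ l :=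
  mguL_exists_aux (Vl l).card (sizeL l) l le_rfl le_rfl hu

end MguMain


section AtomLemmas

@[simp] theorem Atom.subst_pred (σ : Subst) (A : Atom) : (A.subst σ).pred = A.pred := rfl
@[simp] theorem Atom.subst_args (σ : Subst) (A : Atom) :
    (A.subst σ).args = A.args.map (Tm.subst σ) := rfl

theorem Atom.subst_subst (γ θ : Subst) (A : Atom) :
    (A.subst γ).subst θ = A.subst (Subst.comp θ γ) := by
  cases A with
  | mk p args =>
    simp only [Atom.subst, List.map_map, Atom.mk.injEq, true_and]
    exact List.map_congr_left fun t _ => Tm.subst_subst γ θ t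

theorem Atom.mem_fv {x : ℕ} {A : Atom} : x ∈ A.fv ↔ ∃ t ∈ A.args, x ∈ t.fv := by
  cases A with
  | mk p args =>
    simp only [Atom.fv, mem_foldr_union]
    constructor
    · rintro ⟨s, hs, hx⟩
      rcases List.mem_map.mp hs with ⟨t, ht, rfl⟩
      exact ⟨t, ht, hx⟩
    · rintro ⟨t, ht, hx⟩
      exact ⟨t.fv, List.mem_map.mpr ⟨t, ht, rfl⟩, hx⟩

theorem Atom.subst_congr {γ δ : Subst} {A : Atom} (h : ∀ x ∈ A.fv, γ x = δ x) :
    A.subst γ = A.subst δ := by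
  cases A with
  | mk p args =>
    simp only [Atom.subst, Atom.mk.injEq, true_and]
    exact List.map_congr_left fun t ht =>
      Tm.subst_congr fun x hx => h x (Atom.mem_fv.mpr ⟨t, ht, hx⟩)

@[simp] theorem Atom.subst_id (A : Atom) : A.subst Subst.id = A := by
  cases A with
  | mk p args =>
    simp only [Atom.subst, Atom.mk.injEq, true_and]
    conv_rhs => rw [← List.map_id args]
    exact List.map_congr_left fun t _ => Tm.subst_id t

theorem Atom.mem_fv_subst {γ : Subst} {A : Atom} {x : ℕ} :
    x ∈ (A.subst γ).fv ↔ ∃ y ∈ A.fv, x ∈ (γ y).fv := by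
  constructor
  · intro hx
    rcases Atom.mem_fv.mp hx with ⟨t', ht', hx⟩
    rcases List.mem_map.mp (by simpa using ht') with ⟨t, ht, rfl⟩
    rcases (Tm.fv_subst γ t x).mp hx with ⟨y, hy, hxy⟩
    exact ⟨y, Atom.mem_fv.mpr ⟨t, ht, hy⟩, hxy⟩
  · rintro ⟨y, hy, hxy⟩
    rcases Atom.mem_fv.mp hy with ⟨t, ht, hyt⟩
    exact Atom.mem_fv.mpr ⟨t.subst γ, by simp; exact ⟨t, ht, rfl⟩,
      (Tm.fv_subst γ t x).mpr ⟨y, hyt, hxy⟩⟩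

@[simp] theorem Atom.ext_subst (A : Atom) (t : Tm) (γ : Subst) :
    (A.ext t).subst γ = (A.subst γ).ext (t.subst γ) := by
  cases A; simp [Atom.ext, Atom.subst]

theorem unifies_of_list {γ : Subst} {A B : Atom} (hp : A.pred = B.pred)
    (hl : A.args.length = B.args.length)
    (h : ∀ p ∈ A.args.zip B.args, p.1.subst γ = p.2.subst γ) : Unifies γ A B := by
  cases A with
  | mk p args =>
    cases B with
    | mk q brgs =>
      simp only [Unifies, Atom.subst, Atom.mk.injEq]
      simp only at hp hl
      exact ⟨hp, map_eq_of_zip hl h⟩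

theorem list_of_unifies {γ : Subst} {A B : Atom} (h : Unifies γ A B) :
    ∀ p ∈ A.args.zip B.args, p.1.subst γ = p.2.subst γ := by
  have : A.args.map (Tm.subst γ) = B.args.map (Tm.subst γ) := by
    have := congrArg Atom.args h
    simpa using this
  exact zip_of_map_eq this

theorem unifies_pred {γ : Subst} {A B : Atom} (h : Unifies γ A B) : A.pred = B.pred := by
  have := congrArg Atom.pred h
  simpa using this

theorem unifies_len {γ : Subst} {A B : Atom} (h : Unifies γ A B) :
    A.args.length = B.args.length := by
  have := congrArg (fun A => A.args.length) h
  simpa using this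

theorem mem_mFV {x : ℕ} {G : Multiset Atom} : x ∈ mFV G ↔ ∃ B ∈ G, x ∈ B.fv := by
  unfold mFV
  induction G using Multiset.induction with
  | empty => simp
  | cons A G ih =>
    simp only [Multiset.map_cons, Multiset.sup_cons, Finset.sup_eq_union,
      Finset.mem_union, ih, Multiset.mem_cons]
    constructor
    · rintro (h | ⟨B, hB, h⟩)
      · exact ⟨A, Or.inl rfl, h⟩
      · exact ⟨B, Or.inr hB, h⟩
    · rintro ⟨B, (rfl | hB), h⟩
      · exact Or.inl h
      · exact Or.inr ⟨B, hB, h⟩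

theorem mem_listFV {x : ℕ} {l : List Atom} : x ∈ listFV l ↔ ∃ B ∈ l, x ∈ B.fv := by
  unfold listFV
  rw [mem_foldr_union]
  constructor
  · rintro ⟨s, hs, hx⟩
    rcases List.mem_map.mp hs with ⟨B, hB, rfl⟩
    exact ⟨B, hB, hx⟩
  · rintro ⟨B, hB, hx⟩
    exact ⟨B.fv, List.mem_map.mpr ⟨B, hB, rfl⟩, hx⟩

theorem Atom.rename_eq_subst (ρ : ℕ → ℕ) (A : Atom) :
    A.rename ρ = A.subst (fun x => .var (ρ x)) := rfl

end AtomLemmas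


section Solvability

/-- Size-indexed provability by instances of program rules. -/
inductive ProvS (Ψ : Prog) : ℕ → Atom → Prop where
  | mk {κ : ℕ} {b : List Atom} {h : Atom} {σ : Subst} {ns : List ℕ}
      (hmem : (κ, b, h) ∈ Ψ) (hlen : ns.length = b.length)
      (hb : ∀ p ∈ b.zip ns, ProvS Ψ p.2 (p.1.subst σ)) :
      ProvS Ψ (ns.sum + 1) (h.subst σ)

/-- Weighted solvability of a multiset of goals. -/
inductive SolvN (Ψ : Prog) (δ : Subst) : Multiset Atom → ℕ → Prop where
  | zero : SolvN Ψ δ 0 0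
  | cons {A : Atom} {G : Multiset Atom} {n N : ℕ} :
      ProvS Ψ n (A.subst δ) → SolvN Ψ δ G N → SolvN Ψ δ (A ::ₘ G) (n + N)

theorem SolvN_congr {Ψ : Prog} {δ δ' : Subst} {G : Multiset Atom} {N : ℕ}
    (h : SolvN Ψ δ G N) (he : ∀ B ∈ G, B.subst δ = B.subst δ') : SolvN Ψ δ' G N := by
  induction h with
  | zero => exact SolvN.zero
  | cons hA hG ih =>
    rename_i A G n N
    refine SolvN.cons ?_ (ih fun B hB => he B (by simp [hB]))
    rw [← he A (by simp)]
    exact hA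

theorem SolvN_zero_inv {Ψ : Prog} {δ : Subst} {N : ℕ} (h : SolvN Ψ δ 0 N) : N = 0 := by
  generalize hG : (0 : Multiset Atom) = H at h
  induction h with
  | zero => rfl
  | cons _ _ _ => exact absurd hG (by simp)

theorem SolvN_cons_inv {Ψ : Prog} {δ : Subst} {A : Atom} {G : Multiset Atom} {N : ℕ}
    (h : SolvN Ψ δ (A ::ₘ G) N) :
    ∃ n N', N = n + N' ∧ ProvS Ψ n (A.subst δ) ∧ SolvN Ψ δ G N' := by
  generalize hH : A ::ₘ G = H at h
  induction h generalizing A G with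
  | zero => exact absurd hH (by simp)
  | cons hA hG ih =>
    rename_i A' G' n N
    rcases Multiset.cons_eq_cons.mp hH.symm with ⟨rfl, rfl⟩ | ⟨hne, H', h1, h2⟩
    · exact ⟨n, N, rfl, hA, hG⟩
    · obtain ⟨m, M, hNM, hPA, hSH⟩ := ih h1.symm
      refine ⟨m, n + M, by omega, hPA, ?_⟩
      rw [h2]
      exact SolvN.cons hA hSH

theorem SolvN_add {Ψ : Prog} {δ : Subst} {G₁ G₂ : Multiset Atom} {N₁ N₂ : ℕ}
    (h1 : SolvN Ψ δ G₁ N₁) (h2 : SolvN Ψ δ G₂ N₂) : SolvN Ψ δ (G₁ + G₂) (N₁ + N₂) := by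
  induction h1 with
  | zero => simpa using h2
  | cons hA hG ih =>
    rename_i A G n N
    have := SolvN.cons hA ih
    rw [Multiset.cons_add]
    convert this using 1
    omega

theorem SolvN_map {Ψ : Prog} {δ γ : Subst} {G : Multiset Atom} {N : ℕ}
    (h : SolvN Ψ (Subst.comp δ γ) G N) : SolvN Ψ δ (G.map (Atom.subst γ)) N := by
  induction h with
  | zero => simp; exact SolvN.zero
  | cons hA hG ih =>
    rename_i A G n N
    rw [Multiset.map_cons]
    exact SolvN.cons (by rwa [Atom.subst_subst]) ih

theorem SolvN_map_inv {Ψ : Prog} {δ γ : Subst} {G : Multiset Atom} {N : ℕ}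
    (h : SolvN Ψ δ (G.map (Atom.subst γ)) N) : SolvN Ψ (Subst.comp δ γ) G N := by
  induction G using Multiset.induction generalizing N with
  | empty => simp at h; rw [SolvN_zero_inv h]; exact SolvN.zero
  | cons A G ih =>
    rw [Multiset.map_cons] at h
    obtain ⟨n, N', rfl, hA, hG⟩ := SolvN_cons_inv h
    exact SolvN.cons (by rwa [← Atom.subst_subst]) (ih hG)

theorem SolvN_list {Ψ : Prog} {δ : Subst} {L : List Atom} {N : ℕ}
    (h : SolvN Ψ δ (↑L) N) :
    ∃ ns : List ℕ, ns.length = L.length ∧ ns.sum = N ∧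
      ∀ p ∈ L.zip ns, ProvS Ψ p.2 (p.1.subst δ) := by
  induction L generalizing N with
  | nil =>
    refine ⟨[], rfl, ?_, by simp⟩
    have : SolvN Ψ δ 0 N := by simpa using h
    simp [SolvN_zero_inv this]
  | cons B L ih =>
    have h' : SolvN Ψ δ (B ::ₘ ↑L) N := h
    obtain ⟨n, N', rfl, hB, hL⟩ := SolvN_cons_inv h'
    obtain ⟨ns, hlen, hsum, hall⟩ := ih hL
    refine ⟨n :: ns, by simp [hlen], by simp [hsum], ?_⟩
    intro p hp
    rcases List.mem_cons.mp (by simpa [List.zip_cons_cons] using hp) with h1 | h1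
    · subst h1; exact hB
    · exact hall p h1

theorem SolvN_of_list {Ψ : Prog} {δ : Subst} {L : List Atom} {ns : List ℕ}
    (hlen : ns.length = L.length)
    (hall : ∀ p ∈ L.zip ns, ProvS Ψ p.2 (p.1.subst δ)) :
    SolvN Ψ δ (↑L) ns.sum := by
  induction L generalizing ns with
  | nil => cases ns with
    | nil => exact SolvN.zero
    | cons n ns => simp at hlen
  | cons B L ih =>
    cases ns with
    | nil => simp at hlen
    | cons n ns =>
      show SolvN Ψ δ (B ::ₘ ↑L) (n :: ns).sum
      simp only [List.sum_cons]
      exact SolvN.cons (hall (B, n) (by simp [List.zip_cons_cons]))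
        (ih (by simpa using hlen) (fun p hp => hall p (by simp [List.zip_cons_cons, hp])))

end Solvability


section Shape

theorem list_decomp_getLast {α : Type*} : ∀ {l : List α} {t : α},
    l.getLast? = some t → l = l.dropLast ++ [t] := by
  intro l
  induction l with
  | nil => intro t ht; simp at ht
  | cons a l ih =>
    intro t ht
    cases l with
    | nil => simp_all
    | cons b l' =>
      rw [List.getLast?_cons_cons] at ht
      have := ih ht
      rw [List.dropLast_cons₂]
      simpa using this

theorem zip_map_fst {α β γ : Type*} (f : α → γ) :
    ∀ (l : List α) (ns : List β),
      (l.map f).zip ns = (l.zip ns).map (fun p => (f p.1, p.2)) := by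
  intro l
  induction l with
  | nil => intro ns; simp
  | cons a l ih =>
    intro ns
    cases ns with
    | nil => simp
    | cons n ns => simp [List.zip_cons_cons, ih]

theorem mem_zip_of_mem_left {α β : Type*} {l : List α} {us : List β}
    (hlen : us.length = l.length) {B : α} (hB : B ∈ l) : ∃ u, (B, u) ∈ l.zip us := by
  rcases List.mem_iff_get.mp hB with ⟨i, rfl⟩
  refine ⟨us.get ⟨i.1, by omega⟩, ?_⟩
  have : (l.zip us).get ⟨i.1, by simp [List.length_zip]; omega⟩ =
      (l.get i, us.get ⟨i.1, by omega⟩) := by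
    simp [List.getElem_zip]
  rw [← this]
  exact List.get_mem _ _

theorem extBody_eq_map_zip : ∀ (b : List Atom) (ys : List ℕ),
    extBody b ys = (b.zip ys).map (fun p => p.1.ext (.var p.2)) := by
  intro b
  induction b with
  | nil => intro ys; simp [extBody]
  | cons B b ih =>
    intro ys
    cases ys with
    | nil => simp [extBody]
    | cons y ys =>
      rw [List.zip_cons_cons, List.map_cons,
        show extBody (B :: b) (y :: ys) = B.ext (.var y) :: extBody b ys from rfl, ih ys]

theorem mem_ruleFV_of_head {b₀ : List Atom} {h₀ : Atom} {x : ℕ} (hx : x ∈ h₀.fv) :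
    x ∈ ruleFV b₀ h₀ := Finset.mem_union_right _ hx

theorem mem_ruleFV_of_body {b₀ : List Atom} {h₀ : Atom} {B : Atom} {x : ℕ}
    (hB : B ∈ b₀) (hx : x ∈ B.fv) : x ∈ ruleFV b₀ h₀ :=
  Finset.mem_union_left _ (mem_listFV.mpr ⟨B, hB, hx⟩)

/-- Structure of the rules of a transformed program. -/
theorem transProg_shape {fsym : ℕ → ℕ} {Φ : Prog} {κ : ℕ} {b : List Atom} {h : Atom}
    (hmem : (κ, b, h) ∈ transProg fsym Φ) :
    ∃ (b₀ : List Atom) (h₀ : Atom) (ys : List ℕ),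
      (κ, b₀, h₀) ∈ Φ ∧ b = extBody b₀ ys ∧
      h = h₀.ext (.fn (fsym κ) (ys.map .var)) ∧
      ys.Nodup ∧ ys.length = b₀.length ∧ ∀ y ∈ ys, y ∉ ruleFV b₀ h₀ := by
  rcases List.mem_map.mp hmem with ⟨r, hr, heq⟩
  obtain ⟨κ₀, b₀, h₀⟩ := r
  simp only [Prod.mk.injEq] at heq
  obtain ⟨hκ, heq2⟩ := heq
  subst hκ
  unfold transRule at heq2
  simp only [Prod.mk.injEq] at heq2
  obtain ⟨hb, hh⟩ := heq2
  set N := (ruleFV b₀ h₀).sup id + 1 with hN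
  refine ⟨b₀, h₀, (List.range b₀.length).map (fun i => N + i), hr, hb.symm, hh.symm,
    ?_, by simp, ?_⟩
  · exact List.nodup_range.map (fun a b hab => by omega)
  · intro y hy hyfv
    rcases List.mem_map.mp hy with ⟨i, _, rfl⟩
    have : id (N + i) ≤ (ruleFV b₀ h₀).sup id := Finset.le_sup hyfv
    simp only [id] at this
    omega

theorem Atom.rename_subst (ρ : ℕ → ℕ) (γ : Subst) (A : Atom) :
    (A.rename ρ).subst γ = A.subst (fun x => γ (ρ x)) := by
  rw [Atom.rename_eq_subst, Atom.subst_subst]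
  apply Atom.subst_congr
  intro x _
  simp

theorem Atom.mem_fv_rename {ρ : ℕ → ℕ} {A : Atom} {x : ℕ} :
    x ∈ (A.rename ρ).fv ↔ ∃ y ∈ A.fv, x = ρ y := by
  rw [Atom.rename_eq_subst]
  rw [Atom.mem_fv_subst]
  constructor
  · rintro ⟨y, hy, hxy⟩
    simp only [Tm.fv_var, Finset.mem_singleton] at hxy
    exact ⟨y, hy, hxy⟩
  · rintro ⟨y, hy, rfl⟩
    exact ⟨y, hy, by simp⟩

end Shape

section Invariant

/-- `B` has last argument the variable `u`. -/
def lastV (B : Atom) (u : ℕ) : Prop := B.args.getLast? = some (.var u)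

/-- Free variables of all but the last argument. -/
def frontFV (B : Atom) : Finset ℕ := (B.args.dropLast.map Tm.fv).foldr (· ∪ ·) ∅

theorem mem_frontFV {B : Atom} {x : ℕ} :
    x ∈ frontFV B ↔ ∃ t ∈ B.args.dropLast, x ∈ t.fv := by
  unfold frontFV
  rw [mem_foldr_union]
  constructor
  · rintro ⟨s, hs, hx⟩
    rcases List.mem_map.mp hs with ⟨t, ht, rfl⟩
    exact ⟨t, ht, hx⟩
  · rintro ⟨t, ht, hx⟩
    exact ⟨t.fv, List.mem_map.mpr ⟨t, ht, rfl⟩, hx⟩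

/-- The goal-multiset invariant: each atom has a variable last argument,
those variables are pairwise distinct, and occur nowhere else. -/
def WL (L : List Atom) (us : List ℕ) : Prop :=
  us.Nodup ∧ us.length = L.length ∧ (∀ p ∈ L.zip us, lastV p.1 p.2) ∧
  ∀ u ∈ us, ∀ C ∈ L, u ∉ frontFV C

theorem lastV_args {B : Atom} {u : ℕ} (h : lastV B u) :
    B.args = B.args.dropLast ++ [Tm.var u] := list_decomp_getLast h

theorem lastV_subst {B : Atom} {u : ℕ} (h : lastV B u) (γ : Subst) :
    (B.subst γ).args = B.args.dropLast.map (Tm.subst γ) ++ [γ u] := by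
  rw [Atom.subst_args]
  conv_lhs => rw [lastV_args h]
  simp

theorem lastV_mem_fv {B : Atom} {u : ℕ} (h : lastV B u) : u ∈ B.fv := by
  apply Atom.mem_fv.mpr
  refine ⟨.var u, ?_, by simp⟩
  rw [lastV_args h]
  simp

theorem mem_fv_of_mem_front {B : Atom} {x : ℕ} (h : x ∈ frontFV B) : x ∈ B.fv := by
  rcases mem_frontFV.mp h with ⟨t, ht, hx⟩
  exact Atom.mem_fv.mpr ⟨t, List.dropLast_subset _ ht, hx⟩

theorem frontFV_subst {B : Atom} {u : ℕ} (h : lastV B u) (γ : Subst) {x : ℕ} :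
    x ∈ frontFV (B.subst γ) ↔ ∃ z ∈ frontFV B, x ∈ (γ z).fv := by
  have hargs : (B.subst γ).args = B.args.dropLast.map (Tm.subst γ) ++ [γ u] :=
    lastV_subst h γ
  have hdrop : (B.subst γ).args.dropLast = B.args.dropLast.map (Tm.subst γ) := by
    rw [hargs]; simp
  rw [mem_frontFV, hdrop]
  constructor
  · rintro ⟨t', ht', hx⟩
    rcases List.mem_map.mp ht' with ⟨t, ht, rfl⟩
    rcases (Tm.fv_subst γ t x).mp hx with ⟨z, hz, hxz⟩
    exact ⟨z, mem_frontFV.mpr ⟨t, ht, hz⟩, hxz⟩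
  · rintro ⟨z, hz, hxz⟩
    rcases mem_frontFV.mp hz with ⟨t, ht, hzt⟩
    exact ⟨t.subst γ, List.mem_map.mpr ⟨t, ht, rfl⟩, (Tm.fv_subst γ t x).mpr ⟨z, hzt, hxz⟩⟩

theorem fv_eq_front_union_last {B : Atom} {u : ℕ} (h : lastV B u) {x : ℕ} (hx : x ∈ B.fv) :
    x ∈ frontFV B ∨ x = u := by
  rcases Atom.mem_fv.mp hx with ⟨t, ht, hxt⟩
  rw [lastV_args h] at ht
  rcases List.mem_append.mp ht with h1 | h1
  · exact Or.inl (mem_frontFV.mpr ⟨t, h1, hxt⟩)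
  · simp only [List.mem_singleton] at h1
    subst h1
    simp only [Tm.fv_var, Finset.mem_singleton] at hxt
    exact Or.inr hxt

/-- A goal satisfying the invariant is in term-matching normal form
w.r.t. a transformed program. -/
theorem WL_TMNF {fsym : ℕ → ℕ} {Φ : Prog} {L : List Atom} {us : List ℕ}
    (hW : WL L us) : TMNF (transProg fsym Φ) (↑L) := by
  rintro G' ⟨κ, b, h, σ, rest, hmem, hG, _⟩
  obtain ⟨b₀, h₀, ys, _, _, hh, _, _, _⟩ := transProg_shape hmem
  have hmemL : h.subst σ ∈ (↑L : Multiset Atom) := by rw [hG]; simp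
  have hmemL' : h.subst σ ∈ L := by exact_mod_cast hmemL
  obtain ⟨u, hu⟩ := mem_zip_of_mem_left hW.2.1 hmemL'
  have hlast := hW.2.2.1 _ hu
  have : (h.subst σ).args.getLast? = some ((Tm.fn (fsym κ) (ys.map .var)).subst σ) := by
    subst hh
    simp only [Atom.ext_subst]
    unfold Atom.ext
    simp
  rw [lastV] at hlast
  rw [this] at hlast
  simp at hlast

end Invariant


section MoreHelpers

theorem mem_zip_of_mem_right {α β : Type*} {l : List α} {us : List β}
    (hlen : us.length = l.length) {u : β} (hu : u ∈ us) : ∃ B, (B, u) ∈ l.zip us := by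
  rcases List.mem_iff_get.mp hu with ⟨i, rfl⟩
  refine ⟨l.get ⟨i.1, by omega⟩, ?_⟩
  have : (l.zip us).get ⟨i.1, by simp [List.length_zip]; omega⟩ =
      (l.get ⟨i.1, by omega⟩, us.get i) := by
    simp [List.getElem_zip]
  rw [← this]
  exact List.get_mem _ _

theorem zip_append_general {α β : Type*} :
    ∀ {l₁ : List α} {m₁ : List β} (l₂ : List α) (m₂ : List β),
      l₁.length = m₁.length →
      (l₁ ++ l₂).zip (m₁ ++ m₂) = l₁.zip m₁ ++ l₂.zip m₂ := by
  intro l₁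
  induction l₁ with
  | nil =>
    intro m₁ l₂ m₂ h
    cases m₁ with
    | nil => simp
    | cons b m₁ => simp at h
  | cons a l₁ ih =>
    intro m₁ l₂ m₂ h
    cases m₁ with
    | nil => simp at h
    | cons b m₁ =>
      simp only [List.cons_append, List.zip_cons_cons]
      rw [ih l₂ m₂ (by simpa using h)]

@[simp] theorem Atom.ext_args (A : Atom) (t : Tm) : (A.ext t).args = A.args ++ [t] := rfl
@[simp] theorem Atom.ext_pred (A : Atom) (t : Tm) : (A.ext t).pred = A.pred := rfl

theorem lastV_ext {B : Atom} {u : ℕ} : lastV (B.ext (.var u)) u := by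
  unfold lastV
  simp

theorem frontFV_ext (B : Atom) (t : Tm) : frontFV (B.ext t) = B.fv := by
  unfold frontFV Atom.fv
  simp

theorem Atom.ext_rename (B : Atom) (t : Tm) (ρ : ℕ → ℕ) :
    (B.ext t).rename ρ = (B.rename ρ).ext (t.subst (fun x => .var (ρ x))) := by
  rw [Atom.rename_eq_subst, Atom.rename_eq_subst, Atom.ext_subst]

theorem fn_map_var_subst (c : ℕ) (zs : List ℕ) (γ : Subst) :
    (Tm.fn c (zs.map .var)).subst γ = .fn c (zs.map γ) := by
  simp [List.map_map, Function.comp]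

theorem length_extBody (b : List Atom) (ys : List ℕ) :
    (extBody b ys).length = min b.length ys.length := by
  unfold extBody
  simp

/-- The transformed body, renamed and substituted, aligned with the fresh
last-argument variables. -/
theorem body_zip_lastV {μ : Subst} {ρ : ℕ → ℕ} {f : ℕ → ℕ} :
    ∀ (b₀ : List Atom) (ys : List ℕ), (∀ y ∈ ys, μ (ρ y) = .var (f y)) →
      ∀ p ∈ ((extBody b₀ ys).map (fun B => (B.rename ρ).subst μ)).zip (ys.map f),
        lastV p.1 p.2 := by
  intro b₀
  induction b₀ with
  | nil => intro ys _ p hp; simp [extBody] at hp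
  | cons B b ih =>
    intro ys hμ p hp
    cases ys with
    | nil => simp [extBody] at hp
    | cons y ys =>
      have hcons : extBody (B :: b) (y :: ys) = B.ext (.var y) :: extBody b ys := rfl
      rw [hcons] at hp
      simp only [List.map_cons, List.zip_cons_cons] at hp
      rcases List.mem_cons.mp hp with h1 | h1
      · subst h1
        show lastV (((B.ext (.var y)).rename ρ).subst μ) (f y)
        rw [Atom.ext_rename, Atom.ext_subst]
        simp only [Tm.subst_var, hμ y (by simp)]
        exact lastV_ext
      · exact ih ys (fun y' hy' => hμ y' (by simp [hy'])) p h1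

end MoreHelpers


section StepMain

theorem step_main {fsym : ℕ → ℕ} {Φ : Prog} {δ : Subst} {A : Atom} {Lr : List Atom}
    {u : ℕ} {usr : List ℕ} {n Nr : ℕ}
    (hW : WL (A :: Lr) (u :: usr))
    (hA : ProvS (transProg fsym Φ) n (A.subst δ))
    (hrest : SolvN (transProg fsym Φ) δ (↑Lr) Nr) :
    ∃ (κ : ℕ) (γ θ : Subst) (L₁ : List Atom) (us₁ : List ℕ) (N₁ : ℕ),
      UnifStepL (transProg fsym Φ) κ γ (↑(A :: Lr)) (↑L₁) ∧
      SubStepL (transProg fsym Φ) κ γ (↑(A :: Lr))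
        ((↑(A :: Lr) : Multiset Atom).map (Atom.subst γ)) ∧
      TMred (transProg fsym Φ) ((↑(A :: Lr) : Multiset Atom).map (Atom.subst γ)) (↑L₁) ∧
      WL L₁ us₁ ∧ SolvN (transProg fsym Φ) θ (↑L₁) N₁ ∧ N₁ + 1 = n + Nr := by
  obtain ⟨hnodup, hWlen, hWzip, hWfr⟩ := hW
  have hAu : lastV A u := hWzip (A, u) (by simp [List.zip_cons_cons])
  -- invert the provability of A
  generalize hD : A.subst δ = D at hA
  cases hA with
  | mk hmem hnslen hb =>
  rename_i κ b' h' σ ns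
  -- shape of the transformed rule
  obtain ⟨b₀, h₀, ys, hmem₀, hbdef, hhdef, hysnd, hyslen, hysfr⟩ := transProg_shape hmem
  -- fresh offset
  set M : ℕ := (mFV (↑(A :: Lr) : Multiset Atom)).sup id + 1 with hM
  have hGlt : ∀ v ∈ mFV (↑(A :: Lr) : Multiset Atom), v < M := by
    intro v hv
    have : id v ≤ (mFV (↑(A :: Lr) : Multiset Atom)).sup id := Finset.le_sup hv
    simp only [id] at this
    omega
  have hAmem : A ∈ (↑(A :: Lr) : Multiset Atom) := by
    rw [← Multiset.cons_coe]; simp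
  have hCmem : ∀ C ∈ Lr, C ∈ (↑(A :: Lr) : Multiset Atom) := by
    intro C hC
    rw [← Multiset.cons_coe]
    simp [hC]
  have hAlt : ∀ v ∈ A.fv, v < M := fun v hv => hGlt v (mem_mFV.mpr ⟨A, hAmem, hv⟩)
  have hClt : ∀ C ∈ Lr, ∀ v ∈ C.fv, v < M :=
    fun C hC v hv => hGlt v (mem_mFV.mpr ⟨C, hCmem C hC, hv⟩)
  set ρ : ℕ → ℕ := fun x => x + M with hρ
  set bodyc : List Atom := b'.map (Atom.rename ρ) with hbodyc
  set headc : Atom := h'.rename ρ with hheadc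
  set yhat : List ℕ := ys.map (fun y => y + M) with hyhat
  set tY : Tm := .fn (fsym κ) (yhat.map .var) with htY
  -- last variables of the rest
  have husr : ∀ v ∈ usr, ∃ C ∈ Lr, lastV C v := by
    intro v hv
    obtain ⟨C, hC⟩ := mem_zip_of_mem_right (by simpa using hWlen) hv
    exact ⟨C, (List.of_mem_zip hC).1, hWzip (C, v) (by simp [List.zip_cons_cons, hC])⟩
  have husrlt : ∀ v ∈ usr, v < M := by
    intro v hv
    obtain ⟨C, hC, hCv⟩ := husr v hv
    exact hClt C hC v (lastV_mem_fv hCv)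
  have hult : u < M := hAlt u (lastV_mem_fv hAu)
  -- decompositions of arguments
  have hAargs : A.args = A.args.dropLast ++ [Tm.var u] := lastV_args hAu
  have hheadc_eq : headc = (h₀.rename ρ).ext tY := by
    rw [hheadc, hhdef, Atom.ext_rename]
    congr 1
    rw [fn_map_var_subst, htY, hyhat, List.map_map]
    rfl
  have hheadc_args : headc.args = (h₀.rename ρ).args ++ [tY] := by
    rw [hheadc_eq]; simp
  -- lengths and predicate
  have hlenAh : A.args.length = h'.args.length := by
    have h1 := congrArg (fun B => B.args.length) hD
    simpa using h1
  have hpredAh : A.pred = h'.pred := by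
    have h1 := congrArg Atom.pred hD
    simpa using h1
  have hheadc_pred : headc.pred = A.pred := by
    rw [hheadc, Atom.rename_eq_subst]
    simp [hpredAh]
  have hlen_front : ((h₀.rename ρ).args).length = (A.args.dropLast).length := by
    have h2 : h'.args.length = h₀.args.length + 1 := by rw [hhdef]; simp
    have h3 : A.args.length = A.args.dropLast.length + 1 := by
      conv_lhs => rw [hAargs]
      simp
    have h4 : ((h₀.rename ρ).args).length = h₀.args.length := by
      rw [Atom.rename_eq_subst]; simp
    omega
  have hheadc_len : headc.args.length = A.args.length := by
    rw [hheadc_args]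
    conv_rhs => rw [hAargs]
    simp [hlen_front]
  -- the first-argument equation system
  set lf : List (Tm × Tm) := ((h₀.rename ρ).args).zip (A.args.dropLast) with hlf
  have hzip_args : headc.args.zip A.args = lf ++ [(tY, Tm.var u)] := by
    rw [hheadc_args]
    conv_lhs => rw [hAargs]
    rw [zip_append_general _ _ hlen_front]
    rfl
  -- facts about the variables of lf
  have hVlf : ∀ z ∈ Vl lf, (∃ w, w ∈ h₀.fv ∧ z = w + M) ∨ z ∈ frontFV A := by
    intro z hz
    rcases mem_Vl.mp hz with ⟨p, hp, hcase⟩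
    have hmem2 := List.of_mem_zip hp
    rcases hcase with h1 | h1
    · left
      have : z ∈ (h₀.rename ρ).fv := Atom.mem_fv.mpr ⟨p.1, hmem2.1, h1⟩
      rcases Atom.mem_fv_rename.mp this with ⟨w, hw, rfl⟩
      exact ⟨w, hw, rfl⟩
    · right
      exact mem_frontFV.mpr ⟨p.2, hmem2.2, h1⟩
  have hfrA_lt : ∀ z ∈ frontFV A, z < M := fun z hz => hAlt z (mem_fv_of_mem_front hz)
  have huVlf : u ∉ Vl lf := by
    intro hu
    rcases hVlf u hu with ⟨w, _, hw⟩ | h1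
    · omega
    · exact hWfr u (by simp) A (by simp) h1
  have hyhatVlf : ∀ y ∈ yhat, y ∉ Vl lf := by
    intro y hy hyin
    rcases List.mem_map.mp hy with ⟨y₀, hy₀, rfl⟩
    rcases hVlf _ hyin with ⟨w, hw, hww⟩ | h1
    · have : y₀ = w := by omega
      subst this
      exact hysfr y₀ hy₀ (mem_ruleFV_of_head hw)
    · have := hfrA_lt _ h1
      omega
  have husrVlf : ∀ v ∈ usr, v ∉ Vl lf := by
    intro v hv hvin
    rcases hVlf v hvin with ⟨w, _, hw⟩ | h1
    · have := husrlt v hv; omega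
    · exact hWfr v (by simp [hv]) A (by simp) h1
  -- the unifier coming from provability
  set δhat : Subst := fun x => if M ≤ x then σ (x - M) else δ x with hδhat
  have hδρ : ∀ x, δhat (x + M) = σ x := by
    intro x
    simp [hδhat]
  have hδlow : ∀ x, x < M → δhat x = δ x := by
    intro x hx
    simp only [hδhat]
    rw [if_neg (by omega)]
  have hUnifδ : Unifies δhat headc A := by
    unfold Unifies
    rw [hheadc, Atom.rename_subst]
    have h1 : (fun x => δhat (ρ x)) = σ := funext fun x => hδρ x
    rw [h1, ← hD]
    exact (Atom.subst_congr fun x hx => (hδlow x (hAlt x hx))).symm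
  have hulf : unifiesL δhat lf := by
    intro p hp
    exact list_of_unifies hUnifδ p (by rw [hzip_args]; simp [hp])
  -- most general unifier of the first arguments
  obtain ⟨μf, hmfu, hmff, hmfs1, hmfs2⟩ := mguL_exists ⟨δhat, hulf⟩
  set μ₀ : Subst := fun z => if z = u then tY else μf z with hμ₀
  have hμ₀u : μ₀ u = tY := by simp [hμ₀]
  have hμ₀ne : ∀ z, z ≠ u → μ₀ z = μf z := by
    intro z hz; simp [hμ₀, hz]
  have hμ₀y : ∀ y ∈ yhat, μ₀ y = .var y := by
    intro y hy
    have hyu : y ≠ u := by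
      rcases List.mem_map.mp hy with ⟨y₀, _, rfl⟩
      omega
    rw [hμ₀ne y hyu]
    exact hmfs1 y (hyhatVlf y hy)
  have htYμ₀ : tY.subst μ₀ = tY := by
    rw [htY, fn_map_var_subst]
    congr 1
    conv_rhs => rw [show yhat.map Tm.var = yhat.map (fun y => Tm.var y) from rfl]
    exact List.map_congr_left fun y hy => hμ₀y y hy
  have hAtom_congr : ∀ B : Atom, u ∉ B.fv → B.subst μ₀ = B.subst μf :=
    fun B hB => Atom.subst_congr fun x hx => hμ₀ne x (fun h => hB (h ▸ hx))
  have hTm_congr : ∀ t : Tm, u ∉ t.fv → t.subst μ₀ = t.subst μf :=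
    fun t ht => Tm.subst_congr fun x hx => hμ₀ne x (fun h => ht (h ▸ hx))
  have hu_not_as : u ∉ frontFV A := hWfr u (by simp) A (by simp)
  have hu_not_lf : ∀ p ∈ lf, u ∉ p.1.fv ∧ u ∉ p.2.fv := by
    intro p hp
    constructor <;> intro hu <;>
      exact huVlf (mem_Vl.mpr ⟨p, hp, by tauto⟩)
  -- μ₀ unifies headc and A
  have hUnif₀ : Unifies μ₀ headc A := by
    apply unifies_of_list hheadc_pred hheadc_len
    intro p hp
    rw [hzip_args] at hp
    rcases List.mem_append.mp hp with h1 | h1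
    · have hun := hu_not_lf p h1
      rw [hTm_congr p.1 hun.1, hTm_congr p.2 hun.2]
      exact hmfu p h1
    · simp only [List.mem_singleton] at h1
      subst h1
      simp only [Tm.subst_var, hμ₀u]
      exact htYμ₀
  -- μ₀ is a most general unifier
  have hMGU : IsMGU μ₀ headc A := by
    refine ⟨hUnif₀, ?_⟩
    intro δ' hδ'
    have hδlf : unifiesL δ' lf := by
      intro p hp
      exact list_of_unifies hδ' p (by rw [hzip_args]; simp [hp])
    obtain ⟨θ, hθ⟩ := hmff δ' hδlf
    have hlastp : tY.subst δ' = δ' u := by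
      have := list_of_unifies hδ' (tY, .var u) (by rw [hzip_args]; simp)
      simpa using this
    refine ⟨θ, funext fun z => ?_⟩
    by_cases hz : z = u
    · subst hz
      simp only [Subst.comp_apply, hμ₀u]
      rw [← hlastp, htY, fn_map_var_subst, fn_map_var_subst]
      congr 1
      apply List.map_congr_left
      intro y hy
      have h1 : δ' y = Subst.comp θ μf y := by rw [← hθ]
      rw [h1]
      simp only [Subst.comp_apply]
      rw [hmfs1 y (hyhatVlf y hy)]
      simp
    · simp only [Subst.comp_apply, hμ₀ne z hz]
      have h1 : δ' z = Subst.comp θ μf z := by rw [← hθ]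
      simpa using h1
  -- freshness of the renamed rule
  have hfresh : FreshRuleFor (transProg fsym Φ) κ (↑(A :: Lr)) bodyc headc := by
    refine ⟨b', h', ρ, hmem, fun a b hab => by simp only [hρ] at hab; omega, rfl, rfl, ?_⟩
    rw [Finset.disjoint_left]
    intro x hx
    have hxM : M ≤ x := by
      rcases Finset.mem_union.mp hx with h1 | h1
      · rcases mem_listFV.mp h1 with ⟨B, hB, hxB⟩
        rcases List.mem_map.mp hB with ⟨B₀, _, rfl⟩
        rcases Atom.mem_fv_rename.mp hxB with ⟨w, _, rfl⟩
        simp [hρ]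
      · rcases Atom.mem_fv_rename.mp h1 with ⟨w, _, rfl⟩
        simp [hρ]
    intro hmem'
    have := hGlt x hmem'
    omega
  -- the new goal
  set L₁ : List Atom := bodyc.map (Atom.subst μ₀) ++ Lr.map (Atom.subst μ₀) with hL₁
  have hcoeL₁ : (↑L₁ : Multiset Atom) =
      ↑(bodyc.map (Atom.subst μ₀)) + (↑Lr : Multiset Atom).map (Atom.subst μ₀) := by
    rw [hL₁]
    rfl
  have hconsG : (↑(A :: Lr) : Multiset Atom) = A ::ₘ ↑Lr := by
    rw [Multiset.cons_coe]
  -- the unification step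
  have hUstep : UnifStepL (transProg fsym Φ) κ μ₀ (↑(A :: Lr)) (↑L₁) := by
    refine ⟨A, ↑Lr, bodyc, headc, hconsG, hfresh, hMGU, ?_⟩
    rw [hcoeL₁]
  -- the substitution step
  have hSstep : SubStepL (transProg fsym Φ) κ μ₀ (↑(A :: Lr))
      ((↑(A :: Lr) : Multiset Atom).map (Atom.subst μ₀)) :=
    ⟨A, ↑Lr, bodyc, headc, hconsG, hfresh, hMGU, rfl⟩
  -- the matching step
  set σhat : Subst := fun x => μ₀ (x + M) with hσhat
  have hbody_eq : bodyc.map (Atom.subst μ₀) = b'.map (Atom.subst σhat) := by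
    rw [hbodyc, List.map_map]
    apply List.map_congr_left
    intro B _
    simp only [Function.comp_apply]
    rw [Atom.rename_subst]
  have hhead_eq : headc.subst μ₀ = h'.subst σhat := by
    rw [hheadc, Atom.rename_subst]
  have hTM : TMred (transProg fsym Φ) ((↑(A :: Lr) : Multiset Atom).map (Atom.subst μ₀))
      (↑L₁) := by
    refine ⟨κ, b', h', σhat, (↑Lr : Multiset Atom).map (Atom.subst μ₀), hmem, ?_, ?_⟩
    · rw [hconsG, Multiset.map_cons]
      congr 1
      rw [← hhead_eq]
      exact hUnif₀.symm
    · rw [hcoeL₁, hbody_eq]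
  -- factorization of the provability unifier
  obtain ⟨θ, hθ⟩ := hMGU.2 δhat hUnifδ
  -- solvability of the new goal
  have hσhatθ : ∀ x, (σhat x).subst θ = σ x := by
    intro x
    have h1 : (μ₀ (x + M)).subst θ = Subst.comp θ μ₀ (x + M) := rfl
    rw [hσhat]
    show (μ₀ (x + M)).subst θ = σ x
    rw [h1, ← hθ]
    exact hδρ x
  have hSolvBody : SolvN (transProg fsym Φ) θ (↑(bodyc.map (Atom.subst μ₀))) ns.sum := by
    have hlen2 : ns.length = (bodyc.map (Atom.subst μ₀)).length := by
      rw [hbody_eq]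
      simpa using hnslen
    apply SolvN_of_list hlen2
    · intro p hp
      rw [hbody_eq, zip_map_fst] at hp
      rcases List.mem_map.mp hp with ⟨q, hq, rfl⟩
      simp only
      rw [Atom.subst_subst]
      have : Subst.comp θ σhat = σ := funext fun x => hσhatθ x
      rw [this]
      exact hb q hq
  have hSolvRest : SolvN (transProg fsym Φ) θ
      ((↑Lr : Multiset Atom).map (Atom.subst μ₀)) Nr := by
    apply SolvN_map
    apply SolvN_congr hrest
    intro B hB
    have hB' : B ∈ Lr := by exact_mod_cast hB
    have h1 : B.subst δ = B.subst δhat :=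
      Atom.subst_congr fun x hx => (hδlow x (hClt B hB' x hx)).symm
    rw [h1, hθ, ← Atom.subst_subst]
  have hSolv : SolvN (transProg fsym Φ) θ (↑L₁) (ns.sum + Nr) := by
    rw [hcoeL₁]
    exact SolvN_add hSolvBody hSolvRest
  -- the invariant for the new goal
  set us₁ : List ℕ := yhat ++ usr with hus₁
  have hWnew : WL L₁ us₁ := by
    have hyhatnd : yhat.Nodup := hysnd.map (fun a b hab => by omega)
    have husrnd : usr.Nodup := (List.nodup_cons.mp hnodup).2
    have hyhatM : ∀ y ∈ yhat, M ≤ y := by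
      intro y hy
      rcases List.mem_map.mp hy with ⟨y₀, _, rfl⟩
      omega
    refine ⟨?_, ?_, ?_, ?_⟩
    · rw [List.nodup_append]
      refine ⟨hyhatnd, husrnd, ?_⟩
      intro y hy v hvy
      have h1 := hyhatM y hy
      have h2 := husrlt v hvy
      omega
    · rw [hus₁, hL₁]
      simp only [List.length_append, List.length_map]
      have h1 : yhat.length = b₀.length := by rw [hyhat]; simpa using hyslen
      have h2 : bodyc.length = b₀.length := by
        rw [hbodyc, hbdef]
        simp only [List.length_map]
        rw [length_extBody]
        omega
      have h3 : usr.length = Lr.length := by simpa using hWlen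
      omega
    · rw [hus₁, hL₁]
      intro p hp
      have hlen3 : (bodyc.map (Atom.subst μ₀)).length = yhat.length := by
        have h1 : yhat.length = b₀.length := by rw [hyhat]; simpa using hyslen
        have h2 : bodyc.length = b₀.length := by
          rw [hbodyc, hbdef]
          simp only [List.length_map]
          rw [length_extBody]
          omega
        simp only [List.length_map]
        omega
      rw [zip_append_general _ _ hlen3] at hp
      rcases List.mem_append.mp hp with h1 | h1
      · -- body atoms
        have hbc : bodyc.map (Atom.subst μ₀) =
            (extBody b₀ ys).map (fun B => (B.rename ρ).subst μ₀) := by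
          rw [hbodyc, hbdef, List.map_map]
          rfl
        rw [hbc, hyhat] at h1
        exact body_zip_lastV b₀ ys
          (fun y hy => hμ₀y (y + M) (List.mem_map.mpr ⟨y, hy, rfl⟩)) p h1
      · -- rest atoms
        rw [zip_map_fst] at h1
        rcases List.mem_map.mp h1 with ⟨q, hq, rfl⟩
        have hqzip : (q.1, q.2) ∈ (A :: Lr).zip (u :: usr) := by
          simp [List.zip_cons_cons]
          right
          exact hq
        have hlastq : lastV q.1 q.2 := hWzip (q.1, q.2) hqzip
        have hq2usr : q.2 ∈ usr := (List.of_mem_zip hq).2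
        have hq2u : q.2 ≠ u := by
          intro h
          have := List.nodup_cons.mp hnodup
          exact this.1 (h ▸ hq2usr)
        have hμq : μ₀ q.2 = .var q.2 := by
          rw [hμ₀ne q.2 hq2u]
          exact hmfs1 q.2 (husrVlf q.2 hq2usr)
        show lastV (q.1.subst μ₀) q.2
        unfold lastV
        rw [lastV_subst hlastq, hμq]
        simp
    · -- front freshness
      intro w hw C hC
      intro hwC
      rw [hus₁] at hw
      rw [hL₁] at hC
      -- analyze which atom C is and where its front variables come from
      have hfvμf : ∀ z, z ≠ u → ∀ x ∈ (μ₀ z).fv, x ∈ Vl lf ∨ x = z := by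
        intro z hz x hx
        rw [hμ₀ne z hz] at hx
        rcases Finset.mem_union.mp (hmfs2 z hx) with h1 | h1
        · exact Or.inl h1
        · simp only [Finset.mem_singleton] at h1
          exact Or.inr h1
      have hwnotVlf : w ∉ Vl lf := by
        rcases List.mem_append.mp hw with h1 | h1
        · exact hyhatVlf w h1
        · exact husrVlf w h1
      rcases List.mem_append.mp hC with h1 | h1
      · -- C is a body atom
        rcases List.mem_map.mp h1 with ⟨Bc, hBc, rfl⟩
        rcases List.mem_map.mp hBc with ⟨B', hB', rfl⟩
        -- B' is an atom of the transformed body: B' = B₀.ext (var y)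
        rw [hbdef, extBody_eq_map_zip] at hB'
        rcases List.mem_map.mp hB' with ⟨q, hq, rfl⟩
        rw [Atom.ext_rename] at hwC
        simp only [Tm.subst_var] at hwC
        have hlastBc : lastV ((q.1.rename ρ).ext (.var (ρ q.2))) (ρ q.2) := lastV_ext
        rcases (frontFV_subst hlastBc μ₀).mp hwC with ⟨z, hz, hwz⟩
        rw [frontFV_ext] at hz
        rcases Atom.mem_fv_rename.mp hz with ⟨w₀, hw₀, rfl⟩
        have hzu : ρ w₀ ≠ u := by simp only [hρ]; omega
        rcases hfvμf (ρ w₀) hzu w hwz with h2 | h2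
        · exact hwnotVlf h2
        · -- w = w₀ + M with w₀ ∈ fv of body atom
          rcases List.mem_append.mp hw with h3 | h3
          · rcases List.mem_map.mp h3 with ⟨y₀, hy₀, rfl⟩
            simp only [hρ] at h2
            have : y₀ = w₀ := by omega
            subst this
            exact hysfr y₀ hy₀
              (mem_ruleFV_of_body (List.of_mem_zip hq).1 hw₀)
          · have := husrlt w h3
            simp only [hρ] at h2
            omega
      · -- C is a rest atom
        rcases List.mem_map.mp h1 with ⟨C₀, hC₀, rfl⟩
        obtain ⟨v, hvC⟩ : ∃ v, (C₀, v) ∈ (A :: Lr).zip (u :: usr) := by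
          obtain ⟨v, hv⟩ := mem_zip_of_mem_left (B := C₀) hWlen (by simp [hC₀])
          exact ⟨v, hv⟩
        have hlastC : lastV C₀ v := hWzip (C₀, v) hvC
        rcases (frontFV_subst hlastC μ₀).mp hwC with ⟨z, hz, hwz⟩
        have hzu : z ≠ u := by
          intro h
          exact hWfr u (by simp) C₀ (by simp [hC₀]) (h ▸ hz)
        rcases hfvμf z hzu w hwz with h2 | h2
        · exact hwnotVlf h2
        · subst h2
          rcases List.mem_append.mp hw with h3 | h3
          · have h4 := hyhatM w h3
            have h5 := hClt C₀ hC₀ w (mem_fv_of_mem_front hz)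
            omega
          · exact hWfr w (by simp [h3]) C₀ (by simp [hC₀]) hz
  exact ⟨κ, μ₀, θ, L₁, us₁, ns.sum + Nr, hUstep, hSstep, hTM, hWnew, hSolv, by omega⟩

end StepMain


section MainLemmas

theorem complete_main {fsym : ℕ → ℕ} {Φ : Prog} :
    ∀ (N : ℕ) (L : List Atom) (us : List ℕ) (δ : Subst),
      WL L us → SolvN (transProg fsym Φ) δ (↑L) N →
      (∀ s, ∃ γ, Relation.ReflTransGen (unifR (transProg fsym Φ)) (↑L, s) (0, γ)) ∧
      (∀ s, ∃ γ, Relation.ReflTransGen (structR (transProg fsym Φ)) (↑L, s) (0, γ)) := by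
  intro N
  induction N using Nat.strong_induction_on with
  | _ N ih =>
    intro L us δ hW hS
    cases L with
    | nil =>
      constructor <;> intro s <;> exact ⟨s, by rw [show ((↑([] : List Atom) : Multiset Atom), s) = ((0 : Multiset Atom), s) by simp]⟩
    | cons A Lr =>
      cases us with
      | nil => exact absurd hW.2.1 (by simp)
      | cons u usr =>
        have hS' : SolvN (transProg fsym Φ) δ (A ::ₘ ↑Lr) N := by
          rwa [Multiset.cons_coe]
        obtain ⟨n, N', rfl, hPA, hSr⟩ := SolvN_cons_inv hS'
        obtain ⟨κ, γ, θ, L₁, us₁, N₁, hU, hSub, hTM, hW1, hSolv1, hN1⟩ :=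
          step_main hW hPA hSr
        have hlt : N₁ < n + N' := by omega
        have IH := ih N₁ hlt L₁ us₁ θ hW1 hSolv1
        constructor
        · intro s
          obtain ⟨γf, hp⟩ := IH.1 (Subst.comp γ s)
          exact ⟨γf, hp.head ⟨κ, γ, hU, rfl⟩⟩
        · intro s
          obtain ⟨γf, hp⟩ := IH.2 (Subst.comp γ s)
          refine ⟨γf, ?_⟩
          have step1 : structR (transProg fsym Φ) (↑(A :: Lr), s)
              ((↑(A :: Lr) : Multiset Atom).map (Atom.subst γ), Subst.comp γ s) :=
            ⟨↑(A :: Lr), .refl, WL_TMNF hW, Or.inr ⟨κ, γ, hSub, rfl⟩⟩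
          have step2 : structR (transProg fsym Φ)
              ((↑(A :: Lr) : Multiset Atom).map (Atom.subst γ), Subst.comp γ s)
              (↑L₁, Subst.comp γ s) :=
            ⟨↑L₁, .single hTM, WL_TMNF hW1, Or.inl ⟨rfl, rfl⟩⟩
          exact (hp.head step2).head step1

/-- Existential solvability. -/
def SolvE (Ψ : Prog) (G : Multiset Atom) : Prop := ∃ δ N, SolvN Ψ δ G N

theorem SolvN_split {Ψ : Prog} {δ : Subst} :
    ∀ {X Y : Multiset Atom} {N : ℕ}, SolvN Ψ δ (X + Y) N →
      ∃ N₁ N₂, N = N₁ + N₂ ∧ SolvN Ψ δ X N₁ ∧ SolvN Ψ δ Y N₂ := by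
  intro X
  induction X using Multiset.induction with
  | empty =>
    intro Y N h
    exact ⟨0, N, (zero_add N).symm, SolvN.zero, by simpa using h⟩
  | cons A X ihX =>
    intro Y N h
    rw [Multiset.cons_add] at h
    obtain ⟨n, N', rfl, hA, hrest⟩ := SolvN_cons_inv h
    obtain ⟨N₁, N₂, rfl, h1, h2⟩ := ihX hrest
    exact ⟨n + N₁, N₂, by omega, SolvN.cons hA h1, h2⟩

theorem SolvE_back_TM {Ψ : Prog} {G G₁ : Multiset Atom}
    (h : TMred Ψ G G₁) (hS : SolvE Ψ G₁) : SolvE Ψ G := by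
  obtain ⟨κ, hstep⟩ := h
  obtain ⟨b, hd, σ, rest, hmem, hGeq, hG1eq⟩ := hstep
  obtain ⟨δ₁, N, hN⟩ := hS
  rw [hG1eq] at hN
  obtain ⟨N₁, N₂, rfl, hbody, hrest⟩ := SolvN_split hN
  obtain ⟨ns, hlen, hsum, hall⟩ := SolvN_list hbody
  have hlen' : ns.length = b.length := by simpa using hlen
  have hprov : ProvS Ψ (ns.sum + 1) (hd.subst (Subst.comp δ₁ σ)) := by
    apply ProvS.mk hmem hlen'
    intro q hq
    have : (q.1.subst σ, q.2) ∈ (b.map (Atom.subst σ)).zip ns := by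
      rw [zip_map_fst]
      exact List.mem_map.mpr ⟨q, hq, rfl⟩
    have h2 := hall _ this
    simp only at h2
    rwa [Atom.subst_subst] at h2
  rw [← Atom.subst_subst] at hprov
  refine ⟨δ₁, ns.sum + 1 + N₂, ?_⟩
  rw [hGeq]
  exact SolvN.cons hprov hrest

theorem SolvE_back_TMrtg {Ψ : Prog} {G G₁ : Multiset Atom}
    (h : Relation.ReflTransGen (TMred Ψ) G G₁) (hS : SolvE Ψ G₁) : SolvE Ψ G := by
  induction h using Relation.ReflTransGen.head_induction_on with
  | refl => exact hS
  | head hstep _ ihs => exact SolvE_back_TM hstep ihs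

theorem SolvE_back_sub {Ψ : Prog} {κ : ℕ} {γ : Subst} {G G₁ : Multiset Atom}
    (h : SubStepL Ψ κ γ G G₁) (hS : SolvE Ψ G₁) : SolvE Ψ G := by
  obtain ⟨A, rest, body, hd, hG, _, _, hG1⟩ := h
  obtain ⟨δ₁, N, hN⟩ := hS
  rw [hG1] at hN
  exact ⟨Subst.comp δ₁ γ, N, SolvN_map_inv hN⟩

theorem SolvE_back_unif {Ψ : Prog} {κ : ℕ} {γ : Subst} {G G₁ : Multiset Atom}
    (h : UnifStepL Ψ κ γ G G₁) (hS : SolvE Ψ G₁) : SolvE Ψ G := by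
  obtain ⟨A, rest, body, hd, hG, hfresh, hmgu, hG1⟩ := h
  obtain ⟨b₀, h₀, ρ, hmem, _, hbdef, hhdef, _⟩ := hfresh
  obtain ⟨δ₁, N, hN⟩ := hS
  rw [hG1] at hN
  obtain ⟨N₁, N₂, rfl, hbody, hrest⟩ := SolvN_split hN
  obtain ⟨ns, hlen, hsum, hall⟩ := SolvN_list hbody
  have hlen' : ns.length = b₀.length := by
    rw [hbdef] at hlen
    simpa using hlen
  set σfull : Subst := Subst.comp δ₁ (Subst.comp γ (fun x => .var (ρ x))) with hσfull
  have hbodyc_eq : ∀ B : Atom, ((B.rename ρ).subst γ).subst δ₁ = B.subst σfull := by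
    intro B
    rw [Atom.rename_subst, Atom.subst_subst]
    apply Atom.subst_congr
    intro x _
    simp [hσfull]
  have hprov : ProvS Ψ (ns.sum + 1) (h₀.subst σfull) := by
    apply ProvS.mk hmem hlen'
    intro q hq
    have hmm : ((q.1.rename ρ).subst γ, q.2) ∈ (body.map (Atom.subst γ)).zip ns := by
      rw [hbdef, List.map_map, zip_map_fst]
      exact List.mem_map.mpr ⟨q, hq, rfl⟩
    have h2 := hall _ hmm
    simp only at h2
    rwa [hbodyc_eq] at h2
  have hAprov : ProvS Ψ (ns.sum + 1) (A.subst (Subst.comp δ₁ γ)) := by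
    have h1 : h₀.subst σfull = ((h₀.rename ρ).subst γ).subst δ₁ := (hbodyc_eq h₀).symm
    have h2 : (h₀.rename ρ).subst γ = A.subst γ := by
      rw [← hhdef]
      exact hmgu.1
    rw [h1, h2, Atom.subst_subst] at hprov
    exact hprov
  refine ⟨Subst.comp δ₁ γ, ns.sum + 1 + N₂, ?_⟩
  rw [hG]
  exact SolvN.cons hAprov (SolvN_map_inv hrest)

theorem unif_sound {Ψ : Prog} {p q : Multiset Atom × Subst}
    (h : Relation.ReflTransGen (unifR Ψ) p q) (hq : q.1 = 0) : SolvE Ψ p.1 := by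
  induction h using Relation.ReflTransGen.head_induction_on with
  | refl => rw [hq]; exact ⟨Subst.id, 0, SolvN.zero⟩
  | head hstep _ ihs =>
    obtain ⟨κ, γ, hU, _⟩ := hstep
    exact SolvE_back_unif hU ihs

theorem struct_sound {Ψ : Prog} {p q : Multiset Atom × Subst}
    (h : Relation.ReflTransGen (structR Ψ) p q) (hq : q.1 = 0) : SolvE Ψ p.1 := by
  induction h using Relation.ReflTransGen.head_induction_on with
  | refl => rw [hq]; exact ⟨Subst.id, 0, SolvN.zero⟩
  | head hstep _ ihs =>
    obtain ⟨G', hT, _, hcase⟩ := hstep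
    apply SolvE_back_TMrtg hT
    rcases hcase with ⟨h1, _⟩ | ⟨κ, γ, hsub, _⟩
    · rwa [h1] at ihs
    · exact SolvE_back_sub hsub ihs

end MainLemmas


/-- Equivalence of LP-Struct and LP-Unif after the realizability
transformation: `F(Φ) ⊢ {A[y]} ⇝* ∅` iff `F(Φ) ⊢ {A[y]} (→^ν·↪^1)* ∅`. -/
theorem struct_unif_equiv (fsym : ℕ → ℕ) (Φ : Prog) (hf : FreshSyms fsym Φ)
    (A : Atom) (y : ℕ) (hy : y ∉ A.fv) :
    UnifSucc (transProg fsym Φ) {A.ext (Tm.var y)} ↔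
      StructSucc (transProg fsym Φ) {A.ext (Tm.var y)} := by
  have hWL : WL [A.ext (Tm.var y)] [y] := by
    refine ⟨by simp, by simp, ?_, ?_⟩
    · intro p hp
      simp only [List.zip_cons_cons, List.zip_nil_left, List.mem_singleton] at hp
      subst hp
      exact lastV_ext
    · intro u hu C hC
      simp only [List.mem_singleton] at hu hC
      subst hu
      subst hC
      rw [frontFV_ext]
      exact hy
  have hcoe : ({A.ext (Tm.var y)} : Multiset Atom) = ↑[A.ext (Tm.var y)] := by
    simp
  constructor
  · rintro ⟨γf, hpath⟩
    obtain ⟨δ, N, hS⟩ := unif_sound hpath rfl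
    rw [hcoe] at hS
    obtain ⟨γ, hp⟩ := (complete_main N _ [y] δ hWL hS).2 Subst.id
    rw [hcoe]
    exact ⟨γ, hp⟩
  · rintro ⟨γf, hpath⟩
    obtain ⟨δ, N, hS⟩ := struct_sound hpath rfl
    rw [hcoe] at hS
    obtain ⟨γ, hp⟩ := (complete_main N _ [y] δ hWL hS).1 Subst.id
    rw [hcoe]
    exact ⟨γ, hp⟩

end SRes
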